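/- Suppose min_k π_k ≥ λ > 0, min_{k≠l} π_{kl} ≥ λ* > 0, n · max_{k≠l} |Δ_{kl}| ≤ C₁, n ≤ N, and there are constants C₂, C₃, C₄, C₅ > 0 and β > 0 such that N^{-1} Σ_k Y_k(0)² < C₂, N^{-1} Σ_k (Y_k(t) − Y_k(s))² ≤ C₃|t−s|^{2β}, N^{-1} Σ_k Y_k(0)⁴ < C₄ and N^{-1} Σ_k (Y_k(t) − Y_k(s))⁴ < C₅|t−s|^{4β} for all s,t ∈ [0,T]. Then there exists a constant C₁₁, depending only on these constants and T, such that for all (s,t) ∈ [0,T]², n² · E[{γ̂_N(t,t) − γ_N(t,t) − γ̂_N(s,s) + γ_N(s,s)}²] ≤ C₁₁ · [n^{-1} + max_{(k,l,k',l') distinct} |E[(I_k I_l − π_{kl})(I_{k'} I_{l'} − π_{k'l'})]|] · |t−s|^{2β}, where I_k is the sample membership indicator of unit k. -/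

import Mathlib

open Finset MeasureTheory ProbabilityTheory Filter Topology

noncomputable section

/-- Expectation of `f` under a sampling design `p` on the population `{0, …, N-1}`. -/
def dExp (N : ℕ) (p : Finset ℕ → ℝ) (f : Finset ℕ → ℝ) : ℝ :=
  ∑ s ∈ (Finset.range N).powerset, p s * f s

/-- Variance of `f` under the sampling design `p`. -/
def dVar (N : ℕ) (p : Finset ℕ → ℝ) (f : Finset ℕ → ℝ) : ℝ :=
  dExp N p (fun s => f s ^ 2) - dExp N p f ^ 2

/-- `p` is a fixed-size-`n` sampling design on the population `{0, …, N-1}`. -/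
structure IsDesign (N n : ℕ) (p : Finset ℕ → ℝ) : Prop where
  nonneg : ∀ s, 0 ≤ p s
  sum_one : ∑ s ∈ (Finset.range N).powerset, p s = 1
  supp : ∀ s, p s ≠ 0 → s ⊆ Finset.range N ∧ s.card = n

/-- First-order inclusion probability `π_k`. -/
def pi1 (N : ℕ) (p : Finset ℕ → ℝ) (k : ℕ) : ℝ :=
  dExp N p fun s => if k ∈ s then 1 else 0

/-- Second-order inclusion probability `π_{kl}` (it equals `π_k` on the diagonal). -/
def pi2 (N : ℕ) (p : Finset ℕ → ℝ) (k l : ℕ) : ℝ :=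
  dExp N p fun s => if k ∈ s ∧ l ∈ s then 1 else 0

/-- `Δ_{kl} = π_{kl} - π_k π_l`; on the diagonal it equals `π_k (1 - π_k)`. -/
def Delta (N : ℕ) (p : Finset ℕ → ℝ) (k l : ℕ) : ℝ :=
  pi2 N p k l - pi1 N p k * pi1 N p l

/-- Sample membership indicator `I_k`. -/
def ind (k : ℕ) (s : Finset ℕ) : ℝ := if k ∈ s then 1 else 0

/-- Population mean trajectory `μ_N`. -/
def popMean (N : ℕ) (Y : ℕ → ℝ → ℝ) (t : ℝ) : ℝ :=
  (N : ℝ)⁻¹ * ∑ k ∈ Finset.range N, Y k t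

/-- Horvitz–Thompson estimator of the mean curve computed from the sample `s`. -/
def htMean (N : ℕ) (p : Finset ℕ → ℝ) (Y : ℕ → ℝ → ℝ) (s : Finset ℕ) (t : ℝ) : ℝ :=
  (N : ℝ)⁻¹ * ∑ k ∈ s, Y k t / pi1 N p k

/-- Covariance function `γ_N(u,v)` of the Horvitz–Thompson estimator under the design. -/
def htCov (N : ℕ) (p : Finset ℕ → ℝ) (Y : ℕ → ℝ → ℝ) (u v : ℝ) : ℝ :=
  dExp N p (fun s => htMean N p Y s u * htMean N p Y s v) -
    dExp N p (fun s => htMean N p Y s u) * dExp N p (fun s => htMean N p Y s v)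

/-- Horvitz–Thompson covariance estimator `γ̂(u,v)`. -/
def htCovEst (N : ℕ) (p : Finset ℕ → ℝ) (Y : ℕ → ℝ → ℝ) (s : Finset ℕ) (u v : ℝ) : ℝ :=
  ((N : ℝ) ^ 2)⁻¹ * ∑ k ∈ s, ∑ l ∈ s,
    Y k u / pi1 N p k * (Y l v / pi1 N p l) * (Delta N p k l / pi2 N p k l)

/-- Mesh (largest gap) of a discretization grid `pts` with `d` subintervals. -/
def meshR (d : ℕ) (hd : 0 < d) (pts : Fin (d + 1) → ℝ) : ℝ :=
  Finset.univ.sup' (⟨⟨0, hd⟩, Finset.mem_univ _⟩ : (Finset.univ : Finset (Fin d)).Nonempty)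
    fun i : Fin d => |pts i.succ - pts i.castSucc|
-- basic dExp lemmas
lemma dExp_congr {N p f g} (h : ∀ s, p s ≠ 0 → f s = g s) : dExp N p f = dExp N p g := by
  unfold dExp
  refine Finset.sum_congr rfl fun s _ => ?_
  by_cases hp : p s = 0
  · simp [hp]
  · rw [h s hp]

lemma dExp_add {N p f g} : dExp N p (fun s => f s + g s) = dExp N p f + dExp N p g := by
  unfold dExp; rw [← Finset.sum_add_distrib]; exact Finset.sum_congr rfl fun s _ => by ring

lemma dExp_sub {N p f g} : dExp N p (fun s => f s - g s) = dExp N p f - dExp N p g := by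
  unfold dExp; rw [← Finset.sum_sub_distrib]; exact Finset.sum_congr rfl fun s _ => by ring

lemma dExp_const_mul {N p c f} : dExp N p (fun s => c * f s) = c * dExp N p f := by
  unfold dExp; rw [Finset.mul_sum]; exact Finset.sum_congr rfl fun s _ => by ring

lemma dExp_finset_sum {ι : Type*} {N p} (A : Finset ι) (f : ι → Finset ℕ → ℝ) :
    dExp N p (fun s => ∑ i ∈ A, f i s) = ∑ i ∈ A, dExp N p (f i) := by
  unfold dExp
  rw [Finset.sum_comm]
  exact Finset.sum_congr rfl fun s _ => by rw [Finset.mul_sum]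

lemma dExp_const {N p} (h1 : ∑ s ∈ (Finset.range N).powerset, p s = 1) (c : ℝ) :
    dExp N p (fun _ => c) = c := by
  unfold dExp
  rw [← Finset.sum_mul, h1, one_mul]

lemma dExp_mono {N p f g} (hp : ∀ s, 0 ≤ p s) (h : ∀ s, f s ≤ g s) :
    dExp N p f ≤ dExp N p g :=
  Finset.sum_le_sum fun s _ => mul_le_mul_of_nonneg_left (h s) (hp s)

lemma abs_dExp_le {N p f C} (hp : ∀ s, 0 ≤ p s)
    (h1 : ∑ s ∈ (Finset.range N).powerset, p s = 1) (hf : ∀ s, |f s| ≤ C) :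
    |dExp N p f| ≤ C := by
  calc |dExp N p f| ≤ ∑ s ∈ (Finset.range N).powerset, |p s * f s| :=
        Finset.abs_sum_le_sum_abs _ _
    _ ≤ ∑ s ∈ (Finset.range N).powerset, p s * C := by
        refine Finset.sum_le_sum fun s _ => ?_
        rw [abs_mul, abs_of_nonneg (hp s)]
        exact mul_le_mul_of_nonneg_left (hf s) (hp s)
    _ = C := by rw [← Finset.sum_mul, h1, one_mul]

lemma dExp_ind {N p k} : dExp N p (fun s => ind k s) = pi1 N p k := rfl

lemma dExp_ind_mul_ind {N p k l} :
    dExp N p (fun s => ind k s * ind l s) = pi2 N p k l := by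
  unfold pi2
  refine dExp_congr fun s _ => ?_
  unfold ind
  by_cases hk : k ∈ s <;> by_cases hl : l ∈ s <;> simp [hk, hl]

lemma pi2_self {N p k} : pi2 N p k k = pi1 N p k := by
  unfold pi2 pi1; simp

lemma pi2_symm {N p k l} : pi2 N p k l = pi2 N p l k := by
  unfold pi2; simp [and_comm]

lemma ind_nonneg {k s} : (0:ℝ) ≤ ind k s := by unfold ind; split <;> norm_num
lemma ind_le_one {k s} : ind k s ≤ 1 := by unfold ind; split <;> norm_num
lemma ind_mul_self {k s} : ind k s * ind k s = ind k s := by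
  unfold ind; split <;> norm_num

lemma pi1_nonneg {N p k} (hp : ∀ s, 0 ≤ p s) : 0 ≤ pi1 N p k := by
  unfold pi1 dExp
  exact Finset.sum_nonneg fun s _ => mul_nonneg (hp s) (by dsimp only; split <;> norm_num)

lemma pi1_le_one {N p k} (hp : ∀ s, 0 ≤ p s)
    (h1 : ∑ s ∈ (Finset.range N).powerset, p s = 1) : pi1 N p k ≤ 1 := by
  have := abs_dExp_le (f := fun s => if k ∈ s then (1:ℝ) else 0) (C := 1) hp h1
    (fun s => by split <;> simp)
  calc pi1 N p k ≤ |pi1 N p k| := le_abs_self _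
    _ ≤ 1 := this

lemma pi2_nonneg {N p k l} (hp : ∀ s, 0 ≤ p s) : 0 ≤ pi2 N p k l := by
  unfold pi2 dExp
  exact Finset.sum_nonneg fun s _ => mul_nonneg (hp s) (by dsimp only; split <;> norm_num)

lemma pi2_le_one {N p k l} (hp : ∀ s, 0 ≤ p s)
    (h1 : ∑ s ∈ (Finset.range N).powerset, p s = 1) : pi2 N p k l ≤ 1 := by
  have := abs_dExp_le (f := fun s => if k ∈ s ∧ l ∈ s then (1:ℝ) else 0) (C := 1) hp h1
    (fun s => by split <;> simp)
  calc pi2 N p k l ≤ |pi2 N p k l| := le_abs_self _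
    _ ≤ 1 := this


lemma sum_subset_ind {N : ℕ} {sam : Finset ℕ} (hs : sam ⊆ Finset.range N) (f : ℕ → ℝ) :
    ∑ k ∈ sam, f k = ∑ k ∈ Finset.range N, ind k sam * f k := by
  rw [← Finset.sum_subset hs (fun x _ hx => by simp [ind, hx])]
  exact Finset.sum_congr rfl fun k hk => by simp [ind, hk]

lemma double_sum_split (R : Finset ℕ) (g : ℕ → ℕ → ℝ) :
    ∑ k ∈ R, ∑ l ∈ R, g k l
      = ∑ k ∈ R, g k k + ∑ k ∈ R, ∑ l ∈ R, if k = l then 0 else g k l := by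
  rw [← Finset.sum_add_distrib]
  refine Finset.sum_congr rfl fun k hk => ?_
  have h1 : ∑ l ∈ R, g k l
      = ∑ l ∈ R, ((if k = l then g k l else 0) + if k = l then 0 else g k l) := by
    refine Finset.sum_congr rfl fun l _ => by split <;> ring
  rw [h1, Finset.sum_add_distrib, Finset.sum_ite_eq R k (g k), if_pos hk]

lemma sum4_comb (R : Finset ℕ) (f1 f2 f3 f4 : ℕ → ℕ → ℝ) :
    (∑ k ∈ R, ∑ l ∈ R, f1 k l) - (∑ k ∈ R, ∑ l ∈ R, f2 k l)
      - (∑ k ∈ R, ∑ l ∈ R, f3 k l) + (∑ k ∈ R, ∑ l ∈ R, f4 k l)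
      = ∑ k ∈ R, ∑ l ∈ R, (f1 k l - f2 k l - f3 k l + f4 k l) := by
  rw [← Finset.sum_sub_distrib, ← Finset.sum_sub_distrib, ← Finset.sum_add_distrib]
  exact Finset.sum_congr rfl fun k _ => by
    rw [← Finset.sum_sub_distrib, ← Finset.sum_sub_distrib, ← Finset.sum_add_distrib]

lemma est_rewrite (N : ℕ) (p : Finset ℕ → ℝ) (Y : ℕ → ℝ → ℝ) {sam : Finset ℕ}
    (hs : sam ⊆ Finset.range N) (v : ℝ) :
    htCovEst N p Y sam v v = ((N : ℝ) ^ 2)⁻¹ * ∑ k ∈ Finset.range N, ∑ l ∈ Finset.range N,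
      ind k sam * ind l sam *
        (Y k v / pi1 N p k * (Y l v / pi1 N p l) * (Delta N p k l / pi2 N p k l)) := by
  unfold htCovEst
  congr 1
  rw [sum_subset_ind hs]
  refine Finset.sum_congr rfl fun k _ => ?_
  rw [sum_subset_ind hs, Finset.mul_sum]
  exact Finset.sum_congr rfl fun l _ => by ring

lemma mean_rewrite (N : ℕ) (p : Finset ℕ → ℝ) (Y : ℕ → ℝ → ℝ) {sam : Finset ℕ}
    (hs : sam ⊆ Finset.range N) (v : ℝ) :
    htMean N p Y sam v = (N : ℝ)⁻¹ * ∑ k ∈ Finset.range N, ind k sam * (Y k v / pi1 N p k) := by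
  unfold htMean
  rw [sum_subset_ind hs]

lemma dExp_mean {N n : ℕ} {p : Finset ℕ → ℝ} (Y : ℕ → ℝ → ℝ) (hd : IsDesign N n p) (v : ℝ) :
    dExp N p (fun sam => htMean N p Y sam v)
      = (N : ℝ)⁻¹ * ∑ k ∈ Finset.range N, pi1 N p k * (Y k v / pi1 N p k) := by
  have h0 : dExp N p (fun sam => htMean N p Y sam v)
      = dExp N p (fun sam => (N : ℝ)⁻¹ * ∑ k ∈ Finset.range N, ind k sam * (Y k v / pi1 N p k)) :=
    dExp_congr fun sam hp => mean_rewrite N p Y (hd.supp sam hp).1 v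
  rw [h0, dExp_const_mul, dExp_finset_sum]
  congr 1
  refine Finset.sum_congr rfl fun k _ => ?_
  have h1 : dExp N p (fun sam => ind k sam * (Y k v / pi1 N p k))
      = dExp N p (fun sam => (Y k v / pi1 N p k) * ind k sam) :=
    dExp_congr fun sam _ => by ring
  rw [h1, dExp_const_mul, dExp_ind]
  ring

lemma dExp_mean_sq {N n : ℕ} {p : Finset ℕ → ℝ} (Y : ℕ → ℝ → ℝ) (hd : IsDesign N n p) (v : ℝ) :
    dExp N p (fun sam => htMean N p Y sam v * htMean N p Y sam v)
      = (N : ℝ)⁻¹ * (N : ℝ)⁻¹ * ∑ k ∈ Finset.range N, ∑ l ∈ Finset.range N,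
          pi2 N p k l * (Y k v / pi1 N p k * (Y l v / pi1 N p l)) := by
  have h0 : dExp N p (fun sam => htMean N p Y sam v * htMean N p Y sam v)
      = dExp N p (fun sam => (N : ℝ)⁻¹ * (N : ℝ)⁻¹ *
          ∑ k ∈ Finset.range N, ∑ l ∈ Finset.range N,
            (Y k v / pi1 N p k * (Y l v / pi1 N p l)) * (ind k sam * ind l sam)) := by
    refine dExp_congr fun sam hp => ?_
    rw [mean_rewrite N p Y (hd.supp sam hp).1 v]
    rw [show ((N : ℝ)⁻¹ * ∑ k ∈ Finset.range N, ind k sam * (Y k v / pi1 N p k)) *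
          ((N : ℝ)⁻¹ * ∑ k ∈ Finset.range N, ind k sam * (Y k v / pi1 N p k))
        = (N : ℝ)⁻¹ * (N : ℝ)⁻¹ *
          ((∑ k ∈ Finset.range N, ind k sam * (Y k v / pi1 N p k)) *
            ∑ l ∈ Finset.range N, ind l sam * (Y l v / pi1 N p l)) from by ring]
    rw [Finset.sum_mul_sum]
    congr 1
    refine Finset.sum_congr rfl fun k _ => Finset.sum_congr rfl fun l _ => by ring
  rw [h0, dExp_const_mul, dExp_finset_sum]
  congr 1
  refine Finset.sum_congr rfl fun k _ => ?_
  rw [dExp_finset_sum]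
  refine Finset.sum_congr rfl fun l _ => ?_
  rw [dExp_const_mul, dExp_ind_mul_ind]
  ring

lemma cov_rewrite {N n : ℕ} {p : Finset ℕ → ℝ} (Y : ℕ → ℝ → ℝ) (hd : IsDesign N n p)
    (hpi2 : ∀ k ∈ Finset.range N, ∀ l ∈ Finset.range N, pi2 N p k l ≠ 0) (v : ℝ) :
    htCov N p Y v v = ((N : ℝ) ^ 2)⁻¹ * ∑ k ∈ Finset.range N, ∑ l ∈ Finset.range N,
      pi2 N p k l *
        (Y k v / pi1 N p k * (Y l v / pi1 N p l) * (Delta N p k l / pi2 N p k l)) := by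
  unfold htCov
  rw [dExp_mean_sq Y hd v, dExp_mean Y hd v]
  rw [show ((N : ℝ)⁻¹ * ∑ k ∈ Finset.range N, pi1 N p k * (Y k v / pi1 N p k)) *
        ((N : ℝ)⁻¹ * ∑ k ∈ Finset.range N, pi1 N p k * (Y k v / pi1 N p k))
      = (N : ℝ)⁻¹ * (N : ℝ)⁻¹ *
        ((∑ k ∈ Finset.range N, pi1 N p k * (Y k v / pi1 N p k)) *
          ∑ l ∈ Finset.range N, pi1 N p l * (Y l v / pi1 N p l)) from by ring]
  rw [Finset.sum_mul_sum, ← mul_sub, ← Finset.sum_sub_distrib]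
  rw [show ((N : ℝ) ^ 2)⁻¹ = (N : ℝ)⁻¹ * (N : ℝ)⁻¹ from by rw [sq, mul_inv]]
  congr 1
  refine Finset.sum_congr rfl fun k hk => ?_
  rw [← Finset.sum_sub_distrib]
  refine Finset.sum_congr rfl fun l hl => ?_
  have hne := hpi2 k hk l hl
  rw [show pi2 N p k l * (Y k v / pi1 N p k * (Y l v / pi1 N p l) * (Delta N p k l / pi2 N p k l))
      = Delta N p k l / pi2 N p k l * pi2 N p k l * (Y k v / pi1 N p k * (Y l v / pi1 N p l)) from
    by ring]
  rw [div_mul_cancel₀ _ hne, Delta]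
  ring

/-- The coefficient `c_{kl}`. -/
def ccf (N : ℕ) (p : Finset ℕ → ℝ) (Y : ℕ → ℝ → ℝ) (t s : ℝ) (k l : ℕ) : ℝ :=
  (Y k t / pi1 N p k * (Y l t / pi1 N p l) - Y k s / pi1 N p k * (Y l s / pi1 N p l)) *
    (Delta N p k l / pi2 N p k l)

lemma Zrep {N n : ℕ} {p : Finset ℕ → ℝ} (Y : ℕ → ℝ → ℝ) (hd : IsDesign N n p)
    (hpi2 : ∀ k ∈ Finset.range N, ∀ l ∈ Finset.range N, pi2 N p k l ≠ 0) (t s : ℝ)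
    {sam : Finset ℕ} (hp : p sam ≠ 0) :
    htCovEst N p Y sam t t - htCov N p Y t t - htCovEst N p Y sam s s + htCov N p Y s s
      = ((N : ℝ) ^ 2)⁻¹ *
        ((∑ k ∈ Finset.range N, ccf N p Y t s k k * (ind k sam - pi1 N p k))
          + ∑ k ∈ Finset.range N, ∑ l ∈ Finset.range N,
              if k = l then 0
              else ccf N p Y t s k l * (ind k sam * ind l sam - pi2 N p k l)) := by
  obtain hsub := (hd.supp sam hp).1
  rw [est_rewrite N p Y hsub t, est_rewrite N p Y hsub s,
    cov_rewrite Y hd hpi2 t, cov_rewrite Y hd hpi2 s]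
  rw [show ∀ x a b c d : ℝ, x * a - x * b - (x * c) + x * d = x * (a - b - c + d) from
    fun x a b c d => by ring]
  congr 1
  rw [sum4_comb]
  have hmain : ∀ k ∈ Finset.range N, ∀ l ∈ Finset.range N,
      (ind k sam * ind l sam *
          (Y k t / pi1 N p k * (Y l t / pi1 N p l) * (Delta N p k l / pi2 N p k l))
        - pi2 N p k l *
          (Y k t / pi1 N p k * (Y l t / pi1 N p l) * (Delta N p k l / pi2 N p k l))
        - ind k sam * ind l sam *
          (Y k s / pi1 N p k * (Y l s / pi1 N p l) * (Delta N p k l / pi2 N p k l))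
        + pi2 N p k l *
          (Y k s / pi1 N p k * (Y l s / pi1 N p l) * (Delta N p k l / pi2 N p k l)))
      = ccf N p Y t s k l * (ind k sam * ind l sam - pi2 N p k l) := by
    intro k _ l _
    rw [ccf]
    ring
  rw [Finset.sum_congr rfl fun k hk => Finset.sum_congr rfl fun l hl => hmain k hk l hl]
  rw [double_sum_split]
  congr 1
  refine Finset.sum_congr rfl fun k _ => ?_
  rw [ind_mul_self, pi2_self]


lemma dExp_center2 {N n : ℕ} {p : Finset ℕ → ℝ} (hd : IsDesign N n p) (k k' : ℕ) :
    dExp N p (fun s => (ind k s - pi1 N p k) * (ind k' s - pi1 N p k'))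
      = Delta N p k k' := by
  have h0 : dExp N p (fun s => (ind k s - pi1 N p k) * (ind k' s - pi1 N p k'))
      = dExp N p (fun s => ind k s * ind k' s - pi1 N p k * ind k' s
          - pi1 N p k' * ind k s + pi1 N p k * pi1 N p k') :=
    dExp_congr fun s _ => by ring
  rw [h0, dExp_add, dExp_sub, dExp_sub, dExp_const_mul, dExp_const_mul, dExp_ind, dExp_ind,
    dExp_ind_mul_ind, dExp_const hd.sum_one, Delta]
  ring

lemma sum_if_const {P : Prop} [Decidable P] {α : Type*} (R : Finset α) (f : α → ℝ) :
    ∑ x ∈ R, (if P then f x else 0) = if P then ∑ x ∈ R, f x else 0 := by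
  split <;> simp

lemma diag_bound {N n : ℕ} {p : Finset ℕ → ℝ} (hd : IsDesign N n p) (a : ℕ → ℝ) (Dod : ℝ)
    (hDod0 : 0 ≤ Dod)
    (hDod : ∀ k ∈ Finset.range N, ∀ k' ∈ Finset.range N, k ≠ k' → |Delta N p k k'| ≤ Dod) :
    dExp N p (fun sam => (∑ k ∈ Finset.range N, a k * (ind k sam - pi1 N p k)) ^ 2)
      ≤ (∑ k ∈ Finset.range N, (a k) ^ 2)
        + Dod * (∑ k ∈ Finset.range N, |a k|) ^ 2 := by
  have hexp : dExp N p (fun sam => (∑ k ∈ Finset.range N, a k * (ind k sam - pi1 N p k)) ^ 2)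
      = ∑ k ∈ Finset.range N, ∑ k' ∈ Finset.range N, a k * a k' * Delta N p k k' := by
    have h0 : dExp N p (fun sam => (∑ k ∈ Finset.range N, a k * (ind k sam - pi1 N p k)) ^ 2)
        = dExp N p (fun sam => ∑ k ∈ Finset.range N, ∑ k' ∈ Finset.range N,
            a k * a k' * ((ind k sam - pi1 N p k) * (ind k' sam - pi1 N p k'))) := by
      refine dExp_congr fun sam _ => ?_
      rw [sq, Finset.sum_mul_sum]
      exact Finset.sum_congr rfl fun k _ => Finset.sum_congr rfl fun k' _ => by ring
    rw [h0, dExp_finset_sum]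
    refine Finset.sum_congr rfl fun k _ => ?_
    rw [dExp_finset_sum]
    refine Finset.sum_congr rfl fun k' _ => ?_
    rw [dExp_const_mul, dExp_center2 hd]
  rw [hexp]
  have hπ0 : ∀ j, 0 ≤ pi1 N p j := fun j => pi1_nonneg hd.nonneg
  have hπ1 : ∀ j, pi1 N p j ≤ 1 := fun j => pi1_le_one hd.nonneg hd.sum_one
  have habs : ∀ k ∈ Finset.range N, ∀ k' ∈ Finset.range N,
      a k * a k' * Delta N p k k'
        ≤ (if k = k' then (a k) ^ 2 else 0) + Dod * (|a k| * |a k'|) := by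
    intro k hk k' hk'
    by_cases hkk : k = k'
    · subst hkk
      have hΔ : Delta N p k k ≤ 1 := by
        rw [Delta, pi2_self]
        nlinarith [hπ0 k, hπ1 k]
      have hΔ0 : 0 ≤ Delta N p k k := by
        rw [Delta, pi2_self]
        nlinarith [hπ0 k, hπ1 k]
      rw [if_pos rfl]
      have h1 : a k * a k * Delta N p k k ≤ a k ^ 2 := by nlinarith [sq_nonneg (a k)]
      have h2 : 0 ≤ Dod * (|a k| * |a k|) := by positivity
      nlinarith
    · rw [if_neg hkk]
      have h1 : a k * a k' * Delta N p k k' ≤ |a k| * |a k'| * |Delta N p k k'| := by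
        calc a k * a k' * Delta N p k k' ≤ |a k * a k' * Delta N p k k'| := le_abs_self _
          _ = |a k| * |a k'| * |Delta N p k k'| := by rw [abs_mul, abs_mul]
      have h2 : |a k| * |a k'| * |Delta N p k k'| ≤ |a k| * |a k'| * Dod := by
        have := hDod k hk k' hk' hkk
        have : (0:ℝ) ≤ |a k| * |a k'| := by positivity
        nlinarith [hDod k hk k' hk' hkk]
      linarith [h1, h2]
  calc ∑ k ∈ Finset.range N, ∑ k' ∈ Finset.range N, a k * a k' * Delta N p k k'
      ≤ ∑ k ∈ Finset.range N, ∑ k' ∈ Finset.range N,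
          ((if k = k' then (a k) ^ 2 else 0) + Dod * (|a k| * |a k'|)) :=
        Finset.sum_le_sum fun k hk => Finset.sum_le_sum fun k' hk' => habs k hk k' hk'
    _ = (∑ k ∈ Finset.range N, (a k) ^ 2)
        + Dod * (∑ k ∈ Finset.range N, |a k|) ^ 2 := by
        have e1 : ∀ k ∈ Finset.range N,
            ∑ k' ∈ Finset.range N, ((if k = k' then (a k) ^ 2 else 0) + Dod * (|a k| * |a k'|))
              = (a k) ^ 2 + Dod * (|a k| * ∑ k' ∈ Finset.range N, |a k'|) := by
          intro k hk
          rw [Finset.sum_add_distrib, Finset.sum_ite_eq (Finset.range N) k (fun _ => (a k) ^ 2),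
            if_pos hk, ← Finset.mul_sum, ← Finset.mul_sum]
        rw [Finset.sum_congr rfl e1, Finset.sum_add_distrib, ← Finset.mul_sum,
          ← Finset.sum_mul, sq]

lemma abs_e4_le_one {N n : ℕ} {p : Finset ℕ → ℝ} (hd : IsDesign N n p) (k l k' l' : ℕ) :
    |dExp N p (fun sam => (ind k sam * ind l sam - pi2 N p k l) *
        (ind k' sam * ind l' sam - pi2 N p k' l'))| ≤ 1 := by
  refine abs_dExp_le hd.nonneg hd.sum_one fun sam => ?_
  have h1 : ∀ a b : ℕ, |ind a sam * ind b sam - pi2 N p a b| ≤ 1 := by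
    intro a b
    have h2 := pi2_nonneg (N := N) (p := p) (k := a) (l := b) hd.nonneg
    have h3 := pi2_le_one (N := N) (p := p) (k := a) (l := b) hd.nonneg hd.sum_one
    have h4 : (0:ℝ) ≤ ind a sam := ind_nonneg
    have h5 : ind a sam ≤ 1 := ind_le_one
    have h6 : (0:ℝ) ≤ ind b sam := ind_nonneg
    have h7 : ind b sam ≤ 1 := ind_le_one
    rw [abs_le]
    constructor <;> nlinarith
  calc |(ind k sam * ind l sam - pi2 N p k l) * (ind k' sam * ind l' sam - pi2 N p k' l')|
      = |ind k sam * ind l sam - pi2 N p k l| * |ind k' sam * ind l' sam - pi2 N p k' l'| :=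
        abs_mul _ _
    _ ≤ 1 * 1 := mul_le_mul (h1 k l) (h1 k' l') (abs_nonneg _) zero_le_one
    _ = 1 := mul_one 1


lemma quad_factor (R : Finset ℕ) (f g : ℕ → ℝ) (d : ℝ) :
    ∑ k ∈ R, ∑ k' ∈ R, d * (f k * g k') = d * ((∑ k ∈ R, f k) * ∑ k' ∈ R, g k') := by
  rw [Finset.sum_mul_sum, Finset.mul_sum]
  exact Finset.sum_congr rfl fun k _ => by rw [Finset.mul_sum]

lemma quad_bound {N n : ℕ} {p : Finset ℕ → ℝ} (hd : IsDesign N n p) (c : ℕ → ℕ → ℝ)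
    (hsym : ∀ k l, |c k l| = |c l k|) (D₄ : ℝ) (hD₄ : 0 ≤ D₄)
    (hdist : ∀ k ∈ Finset.range N, ∀ l ∈ Finset.range N, ∀ k' ∈ Finset.range N,
      ∀ l' ∈ Finset.range N, k ≠ l → k ≠ k' → k ≠ l' → l ≠ k' → l ≠ l' → k' ≠ l' →
      |dExp N p (fun sam => (ind k sam * ind l sam - pi2 N p k l) *
        (ind k' sam * ind l' sam - pi2 N p k' l'))| ≤ D₄) :
    dExp N p (fun sam => (∑ k ∈ Finset.range N, ∑ l ∈ Finset.range N,
        if k = l then 0 else c k l * (ind k sam * ind l sam - pi2 N p k l)) ^ 2)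
      ≤ D₄ * (∑ k ∈ Finset.range N, ∑ l ∈ Finset.range N, |c k l|) ^ 2
        + 4 * ∑ k ∈ Finset.range N, (∑ l ∈ Finset.range N, |c k l|) ^ 2 := by
  classical
  set R := Finset.range N with hR
  set h : ℕ → ℕ → Finset ℕ → ℝ :=
    fun k l sam => if k = l then 0 else c k l * (ind k sam * ind l sam - pi2 N p k l) with hh
  -- Step 1: expansion
  have hexp : dExp N p (fun sam => (∑ k ∈ R, ∑ l ∈ R, h k l sam) ^ 2)
      = ∑ k ∈ R, ∑ k' ∈ R, ∑ l ∈ R, ∑ l' ∈ R,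
          dExp N p (fun sam => h k l sam * h k' l' sam) := by
    have h0 : dExp N p (fun sam => (∑ k ∈ R, ∑ l ∈ R, h k l sam) ^ 2)
        = dExp N p (fun sam => ∑ k ∈ R, ∑ k' ∈ R, ∑ l ∈ R, ∑ l' ∈ R,
            h k l sam * h k' l' sam) := by
      refine dExp_congr fun sam _ => ?_
      rw [sq, Finset.sum_mul_sum]
      refine Finset.sum_congr rfl fun k _ => Finset.sum_congr rfl fun k' _ => ?_
      rw [Finset.sum_mul_sum]
    rw [h0, dExp_finset_sum]
    refine Finset.sum_congr rfl fun k _ => ?_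
    rw [dExp_finset_sum]
    refine Finset.sum_congr rfl fun k' _ => ?_
    rw [dExp_finset_sum]
    refine Finset.sum_congr rfl fun l _ => ?_
    rw [dExp_finset_sum]
  -- Step 2: per-tuple bound
  have hq : ∀ k ∈ R, ∀ k' ∈ R, ∀ l ∈ R, ∀ l' ∈ R,
      dExp N p (fun sam => h k l sam * h k' l' sam)
        ≤ D₄ * (|c k l| * |c k' l'|)
          + ((if k = k' then |c k l| * |c k' l'| else 0)
            + (if k = l' then |c k l| * |c k' l'| else 0)
            + (if l = k' then |c k l| * |c k' l'| else 0)
            + (if l = l' then |c k l| * |c k' l'| else 0)) := by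
    intro k hk k' hk' l hl l' hl'
    have hnn : (0:ℝ) ≤ |c k l| * |c k' l'| := by positivity
    have hD4t : (0:ℝ) ≤ D₄ * (|c k l| * |c k' l'|) := mul_nonneg hD₄ hnn
    have hif : ∀ (P : Prop) (_ : Decidable P),
        (0:ℝ) ≤ (if P then |c k l| * |c k' l'| else 0) := by
      intro P hP
      split
      · exact hnn
      · exact le_refl 0
    have hif1 := hif (k = k') inferInstance
    have hif2 := hif (k = l') inferInstance
    have hif3 := hif (l = k') inferInstance
    have hif4 := hif (l = l') inferInstance
    by_cases hkl : k = l
    · have hz : dExp N p (fun sam => h k l sam * h k' l' sam) = 0 := by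
        have : (fun sam => h k l sam * h k' l' sam) = fun _ => (0:ℝ) := by
          funext sam; simp [hh, if_pos hkl]
        rw [this, dExp_const hd.sum_one]
      rw [hz]; linarith
    by_cases hk'l' : k' = l'
    · have hz : dExp N p (fun sam => h k l sam * h k' l' sam) = 0 := by
        have : (fun sam => h k l sam * h k' l' sam) = fun _ => (0:ℝ) := by
          funext sam; simp [hh, if_pos hk'l']
        rw [this, dExp_const hd.sum_one]
      rw [hz]; linarith
    -- main case
    have hrepr : dExp N p (fun sam => h k l sam * h k' l' sam)
        = (c k l * c k' l') * dExp N p (fun sam =>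
            (ind k sam * ind l sam - pi2 N p k l) *
              (ind k' sam * ind l' sam - pi2 N p k' l')) := by
      rw [← dExp_const_mul]
      refine dExp_congr fun sam _ => ?_
      simp only [hh, if_neg hkl, if_neg hk'l']
      ring
    set e4 := dExp N p (fun sam =>
        (ind k sam * ind l sam - pi2 N p k l) *
          (ind k' sam * ind l' sam - pi2 N p k' l')) with he4
    have hle : dExp N p (fun sam => h k l sam * h k' l' sam)
        ≤ |c k l| * |c k' l'| * |e4| := by
      rw [hrepr]
      calc (c k l * c k' l') * e4 ≤ |(c k l * c k' l') * e4| := le_abs_self _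
        _ = |c k l| * |c k' l'| * |e4| := by rw [abs_mul, abs_mul]
    have he4one : |e4| ≤ 1 := abs_e4_le_one hd k l k' l'
    by_cases h1 : k = k'
    · rw [if_pos h1] at hif1 ⊢
      nlinarith
    by_cases h2 : k = l'
    · rw [if_pos h2] at hif2 ⊢
      nlinarith
    by_cases h3 : l = k'
    · rw [if_pos h3] at hif3 ⊢
      nlinarith
    by_cases h4 : l = l'
    · rw [if_pos h4] at hif4 ⊢
      nlinarith
    · have := hdist k hk l hl k' hk' l' hl' hkl h1 h2 h3 h4 hk'l'
      rw [← he4] at this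
      have : |c k l| * |c k' l'| * |e4| ≤ D₄ * (|c k l| * |c k' l'|) := by nlinarith
      linarith
  -- Step 3: sum the bound
  set t : ℕ → ℝ := fun k => ∑ l ∈ R, |c k l| with hts
  have htnn : ∀ k, 0 ≤ t k := fun k => Finset.sum_nonneg fun l _ => abs_nonneg _
  have hsum : ∑ k ∈ R, ∑ k' ∈ R, ∑ l ∈ R, ∑ l' ∈ R,
      (D₄ * (|c k l| * |c k' l'|)
        + ((if k = k' then |c k l| * |c k' l'| else 0)
          + (if k = l' then |c k l| * |c k' l'| else 0)
          + (if l = k' then |c k l| * |c k' l'| else 0)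
          + (if l = l' then |c k l| * |c k' l'| else 0)))
      = D₄ * (∑ k ∈ R, t k) ^ 2 + 4 * ∑ k ∈ R, (t k) ^ 2 := by
    have hA : ∑ k ∈ R, ∑ k' ∈ R, ∑ l ∈ R, ∑ l' ∈ R, D₄ * (|c k l| * |c k' l'|)
        = D₄ * (∑ k ∈ R, t k) ^ 2 := by
      calc ∑ k ∈ R, ∑ k' ∈ R, ∑ l ∈ R, ∑ l' ∈ R, D₄ * (|c k l| * |c k' l'|)
          = ∑ k ∈ R, ∑ k' ∈ R, D₄ * (t k * t k') :=
            Finset.sum_congr rfl fun k _ => Finset.sum_congr rfl fun k' _ =>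
              quad_factor R _ _ D₄
        _ = D₄ * ((∑ k ∈ R, t k) * ∑ k' ∈ R, t k') := quad_factor R t t D₄
        _ = D₄ * (∑ k ∈ R, t k) ^ 2 := by rw [sq]
    have hB : ∑ k ∈ R, ∑ k' ∈ R, ∑ l ∈ R, ∑ l' ∈ R,
        (if k = k' then |c k l| * |c k' l'| else 0) = ∑ k ∈ R, (t k) ^ 2 := by
      have e1 : ∀ k ∈ R, ∀ k' : ℕ, ∑ l ∈ R, ∑ l' ∈ R,
          (if k = k' then |c k l| * |c k' l'| else 0)
            = if k = k' then t k * t k' else 0 := by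
        intro k _ k'
        rw [Finset.sum_congr rfl fun l (_ : l ∈ R) =>
          sum_if_const R (fun l' => |c k l| * |c k' l'|), sum_if_const R _]
        split
        · rw [← Finset.sum_mul_sum]
        · rfl
      refine Finset.sum_congr rfl fun k hk => ?_
      rw [Finset.sum_congr rfl fun k' (_ : k' ∈ R) => e1 k hk k',
        Finset.sum_ite_eq R k (fun k' => t k * t k'), if_pos hk, sq]
    have hC : ∑ k ∈ R, ∑ k' ∈ R, ∑ l ∈ R, ∑ l' ∈ R,
        (if k = l' then |c k l| * |c k' l'| else 0) = ∑ k ∈ R, (t k) ^ 2 := by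
      refine Finset.sum_congr rfl fun k hk => ?_
      have e1 : ∀ k' l : ℕ, ∑ l' ∈ R, (if k = l' then |c k l| * |c k' l'| else 0)
          = |c k l| * |c k' k| := by
        intro k' l
        rw [Finset.sum_ite_eq R k (fun l' => |c k l| * |c k' l'|), if_pos hk]
      calc ∑ k' ∈ R, ∑ l ∈ R, ∑ l' ∈ R, (if k = l' then |c k l| * |c k' l'| else 0)
          = ∑ k' ∈ R, ∑ l ∈ R, |c k l| * |c k' k| :=
            Finset.sum_congr rfl fun k' _ => Finset.sum_congr rfl fun l _ => e1 k' l
        _ = ∑ k' ∈ R, t k * |c k' k| :=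
            Finset.sum_congr rfl fun k' _ => by rw [← Finset.sum_mul]
        _ = t k * ∑ k' ∈ R, |c k' k| := by rw [Finset.mul_sum]
        _ = t k * t k := by
            rw [Finset.sum_congr rfl fun k' (_ : k' ∈ R) => hsym k' k]
        _ = (t k) ^ 2 := (sq (t k)).symm
    have hD : ∑ k ∈ R, ∑ k' ∈ R, ∑ l ∈ R, ∑ l' ∈ R,
        (if l = k' then |c k l| * |c k' l'| else 0) = ∑ k ∈ R, (t k) ^ 2 := by
      have e1 : ∀ k k', k' ∈ R → ∑ l ∈ R, ∑ l' ∈ R,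
          (if l = k' then |c k l| * |c k' l'| else 0) = |c k k'| * t k' := by
        intro k k' hk'
        have e2 : ∀ l : ℕ, ∑ l' ∈ R, (if l = k' then |c k l| * |c k' l'| else 0)
            = if l = k' then |c k l| * t k' else 0 := by
          intro l
          rw [sum_if_const R (fun l' => |c k l| * |c k' l'|)]
          split
          · rw [← Finset.mul_sum]
          · rfl
        rw [Finset.sum_congr rfl fun l (_ : l ∈ R) => e2 l,
          Finset.sum_ite_eq' R k' (fun l => |c k l| * t k'), if_pos hk']
      calc ∑ k ∈ R, ∑ k' ∈ R, ∑ l ∈ R, ∑ l' ∈ R,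
            (if l = k' then |c k l| * |c k' l'| else 0)
          = ∑ k ∈ R, ∑ k' ∈ R, |c k k'| * t k' :=
            Finset.sum_congr rfl fun k _ => Finset.sum_congr rfl fun k' hk' => e1 k k' hk'
        _ = ∑ k' ∈ R, ∑ k ∈ R, |c k k'| * t k' := Finset.sum_comm
        _ = ∑ k' ∈ R, (∑ k ∈ R, |c k k'|) * t k' :=
            Finset.sum_congr rfl fun k' _ => by rw [Finset.sum_mul]
        _ = ∑ k' ∈ R, (t k') ^ 2 := by
            refine Finset.sum_congr rfl fun k' _ => ?_
            rw [Finset.sum_congr rfl fun k (_ : k ∈ R) => hsym k k', sq]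
    have hE : ∑ k ∈ R, ∑ k' ∈ R, ∑ l ∈ R, ∑ l' ∈ R,
        (if l = l' then |c k l| * |c k' l'| else 0) = ∑ k ∈ R, (t k) ^ 2 := by
      have e1 : ∀ k k' l, l ∈ R → ∑ l' ∈ R, (if l = l' then |c k l| * |c k' l'| else 0)
          = |c k l| * |c k' l| := by
        intro k k' l hl
        rw [Finset.sum_ite_eq R l (fun l' => |c k l| * |c k' l'|), if_pos hl]
      calc ∑ k ∈ R, ∑ k' ∈ R, ∑ l ∈ R, ∑ l' ∈ R,
            (if l = l' then |c k l| * |c k' l'| else 0)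
          = ∑ k ∈ R, ∑ k' ∈ R, ∑ l ∈ R, |c k l| * |c k' l| :=
            Finset.sum_congr rfl fun k _ => Finset.sum_congr rfl fun k' _ =>
              Finset.sum_congr rfl fun l hl => e1 k k' l hl
        _ = ∑ k ∈ R, ∑ l ∈ R, ∑ k' ∈ R, |c k l| * |c k' l| :=
            Finset.sum_congr rfl fun k _ => Finset.sum_comm
        _ = ∑ k ∈ R, ∑ l ∈ R, |c k l| * t l := by
            refine Finset.sum_congr rfl fun k _ => Finset.sum_congr rfl fun l _ => ?_
            rw [← Finset.mul_sum, Finset.sum_congr rfl fun k' (_ : k' ∈ R) => hsym k' l]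
        _ = ∑ l ∈ R, ∑ k ∈ R, |c k l| * t l := Finset.sum_comm
        _ = ∑ l ∈ R, (t l) ^ 2 := by
            refine Finset.sum_congr rfl fun l _ => ?_
            rw [← Finset.sum_mul, Finset.sum_congr rfl fun k (_ : k ∈ R) => hsym k l, sq]
    simp only [Finset.sum_add_distrib]
    rw [hA, hB, hC, hD, hE]
    ring
  show dExp N p (fun sam => (∑ k ∈ R, ∑ l ∈ R, h k l sam) ^ 2)
      ≤ D₄ * (∑ k ∈ R, ∑ l ∈ R, |c k l|) ^ 2 + 4 * ∑ k ∈ R, (∑ l ∈ R, |c k l|) ^ 2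
  calc dExp N p (fun sam => (∑ k ∈ R, ∑ l ∈ R, h k l sam) ^ 2)
      = ∑ k ∈ R, ∑ k' ∈ R, ∑ l ∈ R, ∑ l' ∈ R,
          dExp N p (fun sam => h k l sam * h k' l' sam) := hexp
    _ ≤ ∑ k ∈ R, ∑ k' ∈ R, ∑ l ∈ R, ∑ l' ∈ R,
          (D₄ * (|c k l| * |c k' l'|)
            + ((if k = k' then |c k l| * |c k' l'| else 0)
              + (if k = l' then |c k l| * |c k' l'| else 0)
              + (if l = k' then |c k l| * |c k' l'| else 0)
              + (if l = l' then |c k l| * |c k' l'| else 0))) := by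
        refine Finset.sum_le_sum fun k hk => Finset.sum_le_sum fun k' hk' => ?_
        exact Finset.sum_le_sum fun l hl => Finset.sum_le_sum fun l' hl' =>
          hq k hk k' hk' l hl l' hl'
    _ = D₄ * (∑ k ∈ R, t k) ^ 2 + 4 * ∑ k ∈ R, (t k) ^ 2 := hsum
    _ = D₄ * (∑ k ∈ R, ∑ l ∈ R, |c k l|) ^ 2 + 4 * ∑ k ∈ R, (∑ l ∈ R, |c k l|) ^ 2 := rfl


lemma le_of_sq_le_sq' {x y : ℝ} (hx : 0 ≤ x) (hy : 0 ≤ y) (h : x ^ 2 ≤ y ^ 2) : x ≤ y := by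
  nlinarith

lemma sum_abs_le_of_sq (R : Finset ℕ) (f : ℕ → ℝ) {B : ℝ} (hB : 0 ≤ B)
    (h : (R.card : ℝ) * ∑ k ∈ R, (f k) ^ 2 ≤ B ^ 2) : ∑ k ∈ R, |f k| ≤ B := by
  refine le_of_sq_le_sq' (Finset.sum_nonneg fun k _ => abs_nonneg _) hB ?_
  calc (∑ k ∈ R, |f k|) ^ 2 ≤ (R.card : ℝ) * ∑ k ∈ R, |f k| ^ 2 := by
        exact_mod_cast sq_sum_le_card_mul_sum_sq (f := fun k => |f k|) (s := R)
    _ = (R.card : ℝ) * ∑ k ∈ R, (f k) ^ 2 := by simp [sq_abs]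
    _ ≤ B ^ 2 := h

lemma Delta_symm {N : ℕ} {p : Finset ℕ → ℝ} {k l : ℕ} : Delta N p k l = Delta N p l k := by
  rw [Delta, Delta, show pi2 N p k l = pi2 N p l k from pi2_symm]
  ring

lemma ccf_symm {N : ℕ} {p : Finset ℕ → ℝ} {Y : ℕ → ℝ → ℝ} {t s : ℝ} (k l : ℕ) :
    ccf N p Y t s k l = ccf N p Y t s l k := by
  simp only [ccf, Delta]
  rw [show pi2 N p k l = pi2 N p l k from pi2_symm]
  ring

lemma sq_add_le' (x d : ℝ) : (x + d)^2 ≤ 2*x^2 + 2*d^2 := by nlinarith [sq_nonneg (x-d)]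

lemma pow4_add_le (x d : ℝ) : (x + d)^4 ≤ 8*x^4 + 8*d^4 := by
  calc (x+d)^4 = ((x+d)^2)^2 := by ring
    _ ≤ (2*x^2+2*d^2)^2 := by
        have h1 : (x+d)^2 ≤ 2*x^2+2*d^2 := by nlinarith [sq_nonneg (x-d)]
        exact pow_le_pow_left₀ (sq_nonneg _) h1 2
    _ ≤ 8*x^4+8*d^4 := by nlinarith [sq_nonneg (x^2-d^2)]

lemma abs_one_sub_le_one {x : ℝ} (h0 : 0 ≤ x) (h1 : x ≤ 1) : |1 - x| ≤ 1 := by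
  rw [abs_le]; constructor <;> linarith

lemma ccf_diag_bound {N n : ℕ} {p : Finset ℕ → ℝ} (hd : IsDesign N n p) {lam : ℝ}
    (hlam : 0 < lam) (Y : ℕ → ℝ → ℝ) (t s : ℝ) (k : ℕ) (hπ : lam ≤ pi1 N p k) :
    |ccf N p Y t s k k| ≤ (lam*lam)⁻¹ * |Y k t * Y k t - Y k s * Y k s| := by
  have hπ0 : 0 < pi1 N p k := lt_of_lt_of_le hlam hπ
  have hπ1 : pi1 N p k ≤ 1 := pi1_le_one hd.nonneg hd.sum_one
  have hq : Delta N p k k / pi2 N p k k = 1 - pi1 N p k := by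
    rw [Delta, pi2_self]
    field_simp
  have hrw : ccf N p Y t s k k
      = (Y k t * Y k t - Y k s * Y k s) / (pi1 N p k * pi1 N p k) * (1 - pi1 N p k) := by
    rw [ccf, hq]
    field_simp
  rw [hrw, abs_mul, abs_div, abs_of_pos (by positivity : (0:ℝ) < pi1 N p k * pi1 N p k)]
  calc |Y k t * Y k t - Y k s * Y k s| / (pi1 N p k * pi1 N p k) * |1 - pi1 N p k|
      ≤ |Y k t * Y k t - Y k s * Y k s| / (pi1 N p k * pi1 N p k) * 1 := by
        exact mul_le_mul_of_nonneg_left (abs_one_sub_le_one hπ0.le hπ1) (by positivity)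
    _ = |Y k t * Y k t - Y k s * Y k s| / (pi1 N p k * pi1 N p k) := mul_one _
    _ ≤ |Y k t * Y k t - Y k s * Y k s| / (lam * lam) := by
        apply div_le_div₀ (abs_nonneg _) (le_refl _) (by positivity)
        exact mul_le_mul hπ hπ hlam.le hπ0.le
    _ = (lam*lam)⁻¹ * |Y k t * Y k t - Y k s * Y k s| := by
        rw [div_eq_mul_inv, mul_comm]

lemma ccf_off_bound {N n : ℕ} {p : Finset ℕ → ℝ} {lam lamstar cb : ℝ}
    (hlam : 0 < lam) (hlamstar : 0 < lamstar)
    (Y : ℕ → ℝ → ℝ) (t s : ℝ) (k l : ℕ) (hπk : lam ≤ pi1 N p k) (hπl : lam ≤ pi1 N p l)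
    (hπ2 : lamstar ≤ pi2 N p k l) (hΔ : |Delta N p k l| ≤ cb) :
    |ccf N p Y t s k l| ≤ cb/lamstar * (lam*lam)⁻¹ * |Y k t * Y l t - Y k s * Y l s| := by
  have hπk0 : 0 < pi1 N p k := lt_of_lt_of_le hlam hπk
  have hπl0 : 0 < pi1 N p l := lt_of_lt_of_le hlam hπl
  have hπ20 : 0 < pi2 N p k l := lt_of_lt_of_le hlamstar hπ2
  have hcb : 0 ≤ cb := (abs_nonneg _).trans hΔ
  have hrw : ccf N p Y t s k l
      = (Y k t * Y l t - Y k s * Y l s) / (pi1 N p k * pi1 N p l)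
          * (Delta N p k l / pi2 N p k l) := by
    rw [ccf]
    field_simp
  rw [hrw, abs_mul, abs_div, abs_div,
    abs_of_pos (by positivity : (0:ℝ) < pi1 N p k * pi1 N p l),
    abs_of_pos hπ20]
  calc |Y k t * Y l t - Y k s * Y l s| / (pi1 N p k * pi1 N p l)
        * (|Delta N p k l| / pi2 N p k l)
      ≤ |Y k t * Y l t - Y k s * Y l s| / (lam * lam) * (cb / lamstar) := by
        apply mul_le_mul
        · apply div_le_div₀ (abs_nonneg _) (le_refl _) (by positivity)
          exact mul_le_mul hπk hπl hlam.le hπk0.le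
        · exact div_le_div₀ hcb hΔ hlamstar hπ2
        · positivity
        · positivity
    _ = cb/lamstar * (lam*lam)⁻¹ * |Y k t * Y l t - Y k s * Y l s| := by
        field_simp

lemma final_arith {q M u D₄ a c1 k1 w : ℝ}
    (hq1 : 1 ≤ q) (hqM : q ≤ M) (hu : 0 ≤ u) (hD : 0 ≤ D₄)
    (ha : 0 ≤ a) (hc1 : 0 ≤ c1) (hw : 0 ≤ w) :
    q^2 * (((M^2)⁻¹)^2 * (2*(a*M*u^2 + c1/q*(a*M^2*u^2))
        + 2*(D₄*(k1*M^2*u/q)^2 + 4*(w*M^3*u^2/q^2 + 2*(a*M*u^2)))))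
      ≤ (18*a + 2*c1*a + 8*w + 2*k1^2 + 1) * (q⁻¹ + D₄) * u^2 := by
  have hq0 : (0:ℝ) < q := lt_of_lt_of_le one_pos hq1
  have hM0 : (0:ℝ) < M := lt_of_lt_of_le hq0 hqM
  have h2 : q^2 ≤ M^2 := pow_le_pow_left₀ hq0.le hqM 2
  have h3 : q^3 ≤ M^3 := pow_le_pow_left₀ hq0.le hqM 3
  have key1 : q^2 * ((M^2)⁻¹)^2 * (M*u^2) ≤ u^2 * q⁻¹ := by
    have e1 : q^2 * ((M^2)⁻¹)^2 * (M*u^2) = u^2 * (q^2/M^3) := by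
      field_simp
    rw [e1]
    refine mul_le_mul_of_nonneg_left ?_ (sq_nonneg u)
    rw [div_le_iff₀ (by positivity), inv_mul_eq_div, le_div_iff₀ hq0]
    calc q^2 * q = q^3 := by ring
      _ ≤ M^3 := h3
  have key2 : q^2 * ((M^2)⁻¹)^2 * (M^2*u^2/q) ≤ u^2 * q⁻¹ := by
    have e1 : q^2 * ((M^2)⁻¹)^2 * (M^2*u^2/q) = u^2 * (q/M^2) := by
      field_simp
    rw [e1]
    refine mul_le_mul_of_nonneg_left ?_ (sq_nonneg u)
    rw [div_le_iff₀ (by positivity), inv_mul_eq_div, le_div_iff₀ hq0]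
    calc q * q = q^2 := by ring
      _ ≤ M^2 := h2
  have key3 : q^2 * ((M^2)⁻¹)^2 * (M^4*u^2/q^2) = u^2 := by
    field_simp
    try ring
  have key4 : q^2 * ((M^2)⁻¹)^2 * (M^3*u^2/q^2) ≤ u^2 * q⁻¹ := by
    have e1 : q^2 * ((M^2)⁻¹)^2 * (M^3*u^2/q^2) = u^2 * (M⁻¹) := by
      field_simp
    rw [e1]
    refine mul_le_mul_of_nonneg_left ?_ (sq_nonneg u)
    exact inv_anti₀ hq0 hqM
  have expand : q^2 * (((M^2)⁻¹)^2 * (2*(a*M*u^2 + c1/q*(a*M^2*u^2))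
        + 2*(D₄*(k1*M^2*u/q)^2 + 4*(w*M^3*u^2/q^2 + 2*(a*M*u^2)))))
      = 2*a*(q^2 * ((M^2)⁻¹)^2 * (M*u^2))
        + 2*c1*a*(q^2 * ((M^2)⁻¹)^2 * (M^2*u^2/q))
        + 2*k1^2*D₄*(q^2 * ((M^2)⁻¹)^2 * (M^4*u^2/q^2))
        + 8*w*(q^2 * ((M^2)⁻¹)^2 * (M^3*u^2/q^2))
        + 16*a*(q^2 * ((M^2)⁻¹)^2 * (M*u^2)) := by
    field_simp
    ring
  rw [expand, key3]
  have b1 : 2*a*(q^2 * ((M^2)⁻¹)^2 * (M*u^2)) ≤ 2*a*(u^2*q⁻¹) :=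
    mul_le_mul_of_nonneg_left key1 (by positivity)
  have b2 : 2*c1*a*(q^2 * ((M^2)⁻¹)^2 * (M^2*u^2/q)) ≤ 2*c1*a*(u^2*q⁻¹) :=
    mul_le_mul_of_nonneg_left key2 (by positivity)
  have b4 : 8*w*(q^2 * ((M^2)⁻¹)^2 * (M^3*u^2/q^2)) ≤ 8*w*(u^2*q⁻¹) :=
    mul_le_mul_of_nonneg_left key4 (by positivity)
  have b5 : 16*a*(q^2 * ((M^2)⁻¹)^2 * (M*u^2)) ≤ 16*a*(u^2*q⁻¹) :=
    mul_le_mul_of_nonneg_left key1 (by positivity)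
  have hrest : 2*a*(u^2*q⁻¹) + 2*c1*a*(u^2*q⁻¹) + 2*k1^2*D₄*u^2 + 8*w*(u^2*q⁻¹)
        + 16*a*(u^2*q⁻¹)
      ≤ (18*a + 2*c1*a + 8*w + 2*k1^2 + 1) * (q⁻¹ + D₄) * u^2 := by
    have hx : (0:ℝ) ≤ u^2*q⁻¹ := by positivity
    have hy : (0:ℝ) ≤ D₄*u^2 := by positivity
    have hca : 0 ≤ c1*a := mul_nonneg hc1 ha
    have c1' : 18*a + 2*(c1*a) + 8*w ≤ 18*a + 2*(c1*a) + 8*w + 2*k1^2 + 1 := by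
      have := sq_nonneg k1
      linarith
    have c2' : 2*k1^2 ≤ 18*a + 2*(c1*a) + 8*w + 2*k1^2 + 1 := by linarith
    calc 2*a*(u^2*q⁻¹) + 2*c1*a*(u^2*q⁻¹) + 2*k1^2*D₄*u^2 + 8*w*(u^2*q⁻¹) + 16*a*(u^2*q⁻¹)
        = (18*a + 2*(c1*a) + 8*w)*(u^2*q⁻¹) + (2*k1^2)*(D₄*u^2) := by ring
      _ ≤ (18*a + 2*(c1*a) + 8*w + 2*k1^2 + 1)*(u^2*q⁻¹)
            + (18*a + 2*(c1*a) + 8*w + 2*k1^2 + 1)*(D₄*u^2) :=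
          add_le_add (mul_le_mul_of_nonneg_right c1' hx) (mul_le_mul_of_nonneg_right c2' hy)
      _ = (18*a + 2*c1*a + 8*w + 2*k1^2 + 1) * (q⁻¹ + D₄) * u^2 := by ring
  linarith

set_option maxHeartbeats 2000000 in
/-- second-moment bound for the increments of the Horvitz–Thompson variance
estimator: there is a constant `C₁₁` depending only on `λ, λ*, C₁, C₂, C₃, C₄, C₅, β, T`
such that `n² E[(γ̂_N(t,t) - γ_N(t,t) - γ̂_N(s,s) + γ_N(s,s))²]
  ≤ C₁₁ (n⁻¹ + max_{(k,l,k',l') distinct} |E[(I_k I_l - π_{kl})(I_{k'} I_{l'} - π_{k'l'})]|)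
      |t-s|^{2β}`,
where the maximum is encoded by an arbitrary upper bound `D₄` over all distinct 4-tuples. -/
theorem cov_est_increment_variance_bound
    (lam lamstar C₁ C₂ C₃ C₄ C₅ β T : ℝ)
    (hlam : 0 < lam) (hlamstar : 0 < lamstar) (hC₁ : 0 < C₁) (hC₂ : 0 < C₂)
    (hC₃ : 0 < C₃) (hC₄ : 0 < C₄) (hC₅ : 0 < C₅) (hβ : 0 < β) (hT : 0 < T) :
    ∃ C₁₁ : ℝ, 0 < C₁₁ ∧
      ∀ (N n : ℕ) (Y : ℕ → ℝ → ℝ) (p : Finset ℕ → ℝ), IsDesign N n p → 0 < n → n ≤ N →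
      (∀ k, ContinuousOn (Y k) (Set.Icc 0 T)) →
      (∀ k ∈ Finset.range N, lam ≤ pi1 N p k) →
      (∀ k ∈ Finset.range N, ∀ l ∈ Finset.range N, k ≠ l → lamstar ≤ pi2 N p k l) →
      (∀ k ∈ Finset.range N, ∀ l ∈ Finset.range N, k ≠ l →
        (n : ℝ) * |Delta N p k l| ≤ C₁) →
      ((N : ℝ)⁻¹ * ∑ k ∈ Finset.range N, Y k 0 ^ 2 < C₂) →
      (∀ s ∈ Set.Icc (0 : ℝ) T, ∀ t ∈ Set.Icc (0 : ℝ) T,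
        (N : ℝ)⁻¹ * ∑ k ∈ Finset.range N, (Y k t - Y k s) ^ 2 ≤ C₃ * |t - s| ^ (2 * β)) →
      ((N : ℝ)⁻¹ * ∑ k ∈ Finset.range N, Y k 0 ^ 4 < C₄) →
      (∀ s ∈ Set.Icc (0 : ℝ) T, ∀ t ∈ Set.Icc (0 : ℝ) T,
        (N : ℝ)⁻¹ * ∑ k ∈ Finset.range N, (Y k t - Y k s) ^ 4 ≤ C₅ * |t - s| ^ (4 * β)) →
      ∀ D₄ : ℝ, 0 ≤ D₄ →
      (∀ k ∈ Finset.range N, ∀ l ∈ Finset.range N, ∀ k' ∈ Finset.range N,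
        ∀ l' ∈ Finset.range N,
          k ≠ l → k ≠ k' → k ≠ l' → l ≠ k' → l ≠ l' → k' ≠ l' →
          |dExp N p (fun sam => (ind k sam * ind l sam - pi2 N p k l) *
              (ind k' sam * ind l' sam - pi2 N p k' l'))| ≤ D₄) →
      ∀ s ∈ Set.Icc (0 : ℝ) T, ∀ t ∈ Set.Icc (0 : ℝ) T,
        (n : ℝ) ^ 2 * dExp N p (fun sam =>
            (htCovEst N p Y sam t t - htCov N p Y t t
              - htCovEst N p Y sam s s + htCov N p Y s s) ^ 2)
          ≤ C₁₁ * ((n : ℝ)⁻¹ + D₄) * |t - s| ^ (2 * β) := by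
  refine ⟨72 * ((lam*lam)⁻¹)^2 * Real.sqrt ((8*C₄ + 8*C₅*T^(4*β)) * C₅)
      + 8 * C₁ * ((lam*lam)⁻¹)^2 * Real.sqrt ((8*C₄ + 8*C₅*T^(4*β)) * C₅)
      + 64 * (C₁/(lamstar*(lam*lam)))^2 * (2*C₂ + 2*C₃*T^(2*β)) * C₃
      + 2 * (2*(C₁/(lamstar*(lam*lam)))*Real.sqrt (2*C₂ + 2*C₃*T^(2*β))*Real.sqrt C₃
          + 2*((lam*lam)⁻¹)*Real.sqrt (Real.sqrt ((8*C₄ + 8*C₅*T^(4*β)) * C₅)))^2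
      + 1, by positivity, ?_⟩
  intro N n Y p hd hn hnN hcont hπ1lam hπ2lam hΔC₁ hmom2 hhol2 hmom4 hhol4 D₄ hD₄0 hdist
    s hs t ht
  -- abbreviations
  set A : ℝ := 2*C₂ + 2*C₃*T^(2*β) with hA_def
  set A₄ : ℝ := 8*C₄ + 8*C₅*T^(4*β) with hA4_def
  set sA : ℝ := Real.sqrt A with hsA_def
  set s3 : ℝ := Real.sqrt C₃ with hs3_def
  set E2 : ℝ := Real.sqrt (A₄ * C₅) with hE2_def
  set sE : ℝ := Real.sqrt E2 with hsE_def
  set lm2 : ℝ := (lam*lam)⁻¹ with hlm2_def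
  set κ : ℝ := C₁/(lamstar*(lam*lam)) with hκ_def
  set K₁ : ℝ := 2*κ*sA*s3 + 2*lm2*sE with hK₁_def
  set u : ℝ := |t - s| ^ β with hu_def
  have hA0 : 0 < A := by rw [hA_def]; positivity
  have hA40 : 0 < A₄ := by rw [hA4_def]; positivity
  have hsA0 : 0 ≤ sA := Real.sqrt_nonneg _
  have hs30 : 0 ≤ s3 := Real.sqrt_nonneg _
  have hE20 : 0 ≤ E2 := Real.sqrt_nonneg _
  have hsE0 : 0 ≤ sE := Real.sqrt_nonneg _
  have hlm20 : 0 < lm2 := by rw [hlm2_def]; positivity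
  have hκ0 : 0 < κ := by rw [hκ_def]; positivity
  have hsAsq : sA^2 = A := Real.sq_sqrt hA0.le
  have hs3sq : s3^2 = C₃ := Real.sq_sqrt hC₃.le
  have hE2sq : E2^2 = A₄ * C₅ := Real.sq_sqrt (by positivity)
  have hsEsq : sE^2 = E2 := Real.sq_sqrt hE20
  have hu0 : 0 ≤ u := by rw [hu_def]; positivity
  have hN0 : 0 < N := lt_of_lt_of_le hn hnN
  have hNR : (0:ℝ) < N := by exact_mod_cast hN0
  have hnR : (0:ℝ) < n := by exact_mod_cast hn
  have hnNR : (n:ℝ) ≤ (N:ℝ) := by exact_mod_cast hnN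
  have h1n : (1:ℝ) ≤ (n:ℝ) := by exact_mod_cast hn
  have hβ2 : (0:ℝ) ≤ 2*β := by linarith
  have hβ4 : (0:ℝ) ≤ 4*β := by linarith
  have h2β : |t - s| ^ (2*β) = u^2 := by
    rw [hu_def, show (2:ℝ)*β = β*2 by ring, Real.rpow_mul (abs_nonneg _),
      show (2:ℝ) = ((2:ℕ):ℝ) by norm_num, Real.rpow_natCast]
  have h4β : |t - s| ^ (4*β) = u^4 := by
    rw [hu_def, show (4:ℝ)*β = β*4 by ring]
    rw [Real.rpow_mul (abs_nonneg _), show (4:ℝ) = ((4:ℕ):ℝ) by norm_num]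
    rw [Real.rpow_natCast]
  -- pi facts
  have hπpos : ∀ k ∈ Finset.range N, 0 < pi1 N p k :=
    fun k hk => lt_of_lt_of_le hlam (hπ1lam k hk)
  have hπ2pos : ∀ k ∈ Finset.range N, ∀ l ∈ Finset.range N, 0 < pi2 N p k l := by
    intro k hk l hl
    by_cases hkl : k = l
    · subst hkl; rw [pi2_self]; exact hπpos k hk
    · exact lt_of_lt_of_le hlamstar (hπ2lam k hk l hl hkl)
  have hπ2ne : ∀ k ∈ Finset.range N, ∀ l ∈ Finset.range N, pi2 N p k l ≠ 0 :=
    fun k hk l hl => (hπ2pos k hk l hl).ne'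
  have hΔn : ∀ k ∈ Finset.range N, ∀ l ∈ Finset.range N, k ≠ l →
      |Delta N p k l| ≤ C₁ / n := by
    intro k hk l hl hkl
    rw [le_div_iff₀ hnR, mul_comm]
    exact hΔC₁ k hk l hl hkl
  -- moment sums
  have hg2 : ∑ k ∈ Finset.range N, (Y k t - Y k s)^2 ≤ (N:ℝ) * (C₃ * u^2) := by
    have h := hhol2 s hs t ht
    rw [h2β] at h
    calc ∑ k ∈ Finset.range N, (Y k t - Y k s)^2
        = (N:ℝ) * ((N:ℝ)⁻¹ * ∑ k ∈ Finset.range N, (Y k t - Y k s)^2) := by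
          rw [← mul_assoc, mul_inv_cancel₀ (by positivity : (N:ℝ) ≠ 0), one_mul]
      _ ≤ (N:ℝ) * (C₃ * u^2) := by
          exact mul_le_mul_of_nonneg_left h hNR.le
  have hg4 : ∑ k ∈ Finset.range N, (Y k t - Y k s)^4 ≤ (N:ℝ) * (C₅ * u^4) := by
    have h := hhol4 s hs t ht
    rw [h4β] at h
    calc ∑ k ∈ Finset.range N, (Y k t - Y k s)^4
        = (N:ℝ) * ((N:ℝ)⁻¹ * ∑ k ∈ Finset.range N, (Y k t - Y k s)^4) := by
          rw [← mul_assoc, mul_inv_cancel₀ (by positivity : (N:ℝ) ≠ 0), one_mul]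
      _ ≤ (N:ℝ) * (C₅ * u^4) := mul_le_mul_of_nonneg_left h hNR.le
  have h0T : (0:ℝ) ∈ Set.Icc (0:ℝ) T := ⟨le_refl 0, hT.le⟩
  have hY2 : ∀ v ∈ Set.Icc (0:ℝ) T, ∑ k ∈ Finset.range N, (Y k v)^2 ≤ (N:ℝ) * A := by
    intro v hv
    have hgv := hhol2 0 h0T v hv
    have hTb : |v - 0| ^ (2*β) ≤ T^(2*β) := by
      apply Real.rpow_le_rpow (abs_nonneg _) _ hβ2
      rw [sub_zero, abs_of_nonneg hv.1]; exact hv.2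
    have hgv2 : ∑ k ∈ Finset.range N, (Y k v - Y k 0)^2 ≤ (N:ℝ) * (C₃ * T^(2*β)) := by
      calc ∑ k ∈ Finset.range N, (Y k v - Y k 0)^2
          = (N:ℝ) * ((N:ℝ)⁻¹ * ∑ k ∈ Finset.range N, (Y k v - Y k 0)^2) := by rw [← mul_assoc, mul_inv_cancel₀ (by positivity : (N:ℝ) ≠ 0), one_mul]
        _ ≤ (N:ℝ) * (C₃ * T^(2*β)) := by
            refine mul_le_mul_of_nonneg_left (le_trans hgv ?_) hNR.le
            exact mul_le_mul_of_nonneg_left hTb hC₃.le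
    have hY02 : ∑ k ∈ Finset.range N, (Y k 0)^2 ≤ (N:ℝ) * C₂ := by
      calc ∑ k ∈ Finset.range N, (Y k 0)^2
          = (N:ℝ) * ((N:ℝ)⁻¹ * ∑ k ∈ Finset.range N, (Y k 0)^2) := by rw [← mul_assoc, mul_inv_cancel₀ (by positivity : (N:ℝ) ≠ 0), one_mul]
        _ ≤ (N:ℝ) * C₂ := mul_le_mul_of_nonneg_left hmom2.le hNR.le
    calc ∑ k ∈ Finset.range N, (Y k v)^2
        ≤ ∑ k ∈ Finset.range N, (2*(Y k 0)^2 + 2*(Y k v - Y k 0)^2) := by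
          refine Finset.sum_le_sum fun k _ => ?_
          have h := sq_add_le' (Y k 0) (Y k v - Y k 0)
          have he : Y k 0 + (Y k v - Y k 0) = Y k v := by ring
          rw [he] at h
          exact h
      _ = 2*(∑ k ∈ Finset.range N, (Y k 0)^2) + 2*∑ k ∈ Finset.range N, (Y k v - Y k 0)^2 := by
          rw [Finset.sum_add_distrib, Finset.mul_sum, Finset.mul_sum]
      _ ≤ 2*((N:ℝ)*C₂) + 2*((N:ℝ)*(C₃*T^(2*β))) := by
          have := hgv2; have := hY02; linarith
      _ = (N:ℝ) * A := by rw [hA_def]; ring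
  have hY4 : ∀ v ∈ Set.Icc (0:ℝ) T, ∑ k ∈ Finset.range N, (Y k v)^4 ≤ (N:ℝ) * A₄ := by
    intro v hv
    have hgv := hhol4 0 h0T v hv
    have hTb : |v - 0| ^ (4*β) ≤ T^(4*β) := by
      apply Real.rpow_le_rpow (abs_nonneg _) _ hβ4
      rw [sub_zero, abs_of_nonneg hv.1]; exact hv.2
    have hgv4 : ∑ k ∈ Finset.range N, (Y k v - Y k 0)^4 ≤ (N:ℝ) * (C₅ * T^(4*β)) := by
      calc ∑ k ∈ Finset.range N, (Y k v - Y k 0)^4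
          = (N:ℝ) * ((N:ℝ)⁻¹ * ∑ k ∈ Finset.range N, (Y k v - Y k 0)^4) := by rw [← mul_assoc, mul_inv_cancel₀ (by positivity : (N:ℝ) ≠ 0), one_mul]
        _ ≤ (N:ℝ) * (C₅ * T^(4*β)) := by
            refine mul_le_mul_of_nonneg_left (le_trans hgv ?_) hNR.le
            exact mul_le_mul_of_nonneg_left hTb hC₅.le
    have hY04 : ∑ k ∈ Finset.range N, (Y k 0)^4 ≤ (N:ℝ) * C₄ := by
      calc ∑ k ∈ Finset.range N, (Y k 0)^4
          = (N:ℝ) * ((N:ℝ)⁻¹ * ∑ k ∈ Finset.range N, (Y k 0)^4) := by rw [← mul_assoc, mul_inv_cancel₀ (by positivity : (N:ℝ) ≠ 0), one_mul]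
        _ ≤ (N:ℝ) * C₄ := mul_le_mul_of_nonneg_left hmom4.le hNR.le
    calc ∑ k ∈ Finset.range N, (Y k v)^4
        ≤ ∑ k ∈ Finset.range N, (8*(Y k 0)^4 + 8*(Y k v - Y k 0)^4) := by
          refine Finset.sum_le_sum fun k _ => ?_
          have h := pow4_add_le (Y k 0) (Y k v - Y k 0)
          have he : Y k 0 + (Y k v - Y k 0) = Y k v := by ring
          rw [he] at h
          exact h
      _ = 8*(∑ k ∈ Finset.range N, (Y k 0)^4) + 8*∑ k ∈ Finset.range N, (Y k v - Y k 0)^4 := by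
          rw [Finset.sum_add_distrib, Finset.mul_sum, Finset.mul_sum]
      _ ≤ 8*((N:ℝ)*C₄) + 8*((N:ℝ)*(C₅*T^(4*β))) := by
          have := hgv4; have := hY04; linarith
      _ = (N:ℝ) * A₄ := by rw [hA4_def]; ring
  have hcard : (((Finset.range N).card : ℕ) : ℝ) = (N:ℝ) := by simp
  -- absolute sums
  have hYabs : ∀ v ∈ Set.Icc (0:ℝ) T, ∑ k ∈ Finset.range N, |Y k v| ≤ (N:ℝ) * sA := by
    intro v hv
    refine sum_abs_le_of_sq (Finset.range N) (fun k => Y k v) (by positivity) ?_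
    rw [hcard]
    calc (N:ℝ) * ∑ k ∈ Finset.range N, (Y k v)^2 ≤ (N:ℝ) * ((N:ℝ)*A) :=
          mul_le_mul_of_nonneg_left (hY2 v hv) hNR.le
      _ = ((N:ℝ)*sA)^2 := by rw [mul_pow, hsAsq]; ring
  have hgabs : ∑ k ∈ Finset.range N, |Y k t - Y k s| ≤ (N:ℝ) * s3 * u := by
    refine sum_abs_le_of_sq (Finset.range N) (fun k => Y k t - Y k s) (by positivity) ?_
    rw [hcard]
    calc (N:ℝ) * ∑ k ∈ Finset.range N, (Y k t - Y k s)^2 ≤ (N:ℝ) * ((N:ℝ)*(C₃*u^2)) :=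
          mul_le_mul_of_nonneg_left hg2 hNR.le
      _ = ((N:ℝ)*s3*u)^2 := by rw [mul_pow, mul_pow, hs3sq]; ring
  have hdk2 : ∑ k ∈ Finset.range N, (Y k t * Y k t - Y k s * Y k s)^2
      ≤ 4*(N:ℝ)*E2*u^2 := by
    refine le_of_sq_le_sq' (Finset.sum_nonneg fun k _ => sq_nonneg _) (by positivity) ?_
    have hCS := Finset.sum_mul_sq_le_sq_mul_sq (Finset.range N)
      (fun k => (Y k t + Y k s)^2) (fun k => (Y k t - Y k s)^2)
    have hid : ∑ k ∈ Finset.range N, (Y k t * Y k t - Y k s * Y k s)^2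
        = ∑ k ∈ Finset.range N, (Y k t + Y k s)^2 * (Y k t - Y k s)^2 :=
      Finset.sum_congr rfl fun k _ => by ring
    have h4a : ∑ k ∈ Finset.range N, ((Y k t + Y k s)^2)^2 ≤ 16*(N:ℝ)*A₄ := by
      calc ∑ k ∈ Finset.range N, ((Y k t + Y k s)^2)^2
          = ∑ k ∈ Finset.range N, (Y k t + Y k s)^4 :=
            Finset.sum_congr rfl fun k _ => by ring
        _ ≤ ∑ k ∈ Finset.range N, (8*(Y k t)^4 + 8*(Y k s)^4) :=
            Finset.sum_le_sum fun k _ => pow4_add_le (Y k t) (Y k s)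
        _ = 8*(∑ k ∈ Finset.range N, (Y k t)^4) + 8*∑ k ∈ Finset.range N, (Y k s)^4 := by
            rw [Finset.sum_add_distrib, Finset.mul_sum, Finset.mul_sum]
        _ ≤ 8*((N:ℝ)*A₄) + 8*((N:ℝ)*A₄) := by
            have h1 := hY4 t ht
            have h2 := hY4 s hs
            have h3 : 8*(∑ k ∈ Finset.range N, (Y k t)^4) ≤ 8*((N:ℝ)*A₄) := by linarith
            have h4 : 8*(∑ k ∈ Finset.range N, (Y k s)^4) ≤ 8*((N:ℝ)*A₄) := by linarith
            linarith
        _ = 16*(N:ℝ)*A₄ := by ring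
    have h4b : ∑ k ∈ Finset.range N, ((Y k t - Y k s)^2)^2 ≤ (N:ℝ)*(C₅*u^4) := by
      calc ∑ k ∈ Finset.range N, ((Y k t - Y k s)^2)^2
          = ∑ k ∈ Finset.range N, (Y k t - Y k s)^4 :=
            Finset.sum_congr rfl fun k _ => by ring
        _ ≤ (N:ℝ)*(C₅*u^4) := hg4
    rw [hid]
    calc (∑ k ∈ Finset.range N, (Y k t + Y k s)^2 * (Y k t - Y k s)^2)^2
        ≤ (∑ k ∈ Finset.range N, ((Y k t + Y k s)^2)^2)
            * ∑ k ∈ Finset.range N, ((Y k t - Y k s)^2)^2 := hCS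
      _ ≤ (16*(N:ℝ)*A₄) * ((N:ℝ)*(C₅*u^4)) := by
          refine mul_le_mul h4a h4b (Finset.sum_nonneg fun k _ => sq_nonneg _) ?_
          positivity
      _ = (4*(N:ℝ)*E2*u^2)^2 := by
          rw [show (4*(N:ℝ)*E2*u^2)^2 = 16*(N:ℝ)^2*E2^2*u^4 from by ring, hE2sq]
          ring
  have hdkabs : ∑ k ∈ Finset.range N, |Y k t * Y k t - Y k s * Y k s| ≤ 2*(N:ℝ)*sE*u := by
    refine sum_abs_le_of_sq (Finset.range N)
      (fun k => Y k t * Y k t - Y k s * Y k s) (by positivity) ?_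
    rw [hcard]
    calc (N:ℝ) * ∑ k ∈ Finset.range N, (Y k t * Y k t - Y k s * Y k s)^2
        ≤ (N:ℝ) * (4*(N:ℝ)*E2*u^2) := mul_le_mul_of_nonneg_left hdk2 hNR.le
      _ = (2*(N:ℝ)*sE*u)^2 := by
          rw [show (2*(N:ℝ)*sE*u)^2 = 4*(N:ℝ)^2*sE^2*u^2 from by ring, hsEsq]
          ring
  -- coefficient bounds
  set κn : ℝ := κ/(n:ℝ) with hκn_def
  have hκn0 : 0 ≤ κn := by rw [hκn_def]; positivity
  have hcd : ∀ k ∈ Finset.range N, |ccf N p Y t s k k|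
      ≤ lm2 * |Y k t * Y k t - Y k s * Y k s| := by
    intro k hk
    rw [hlm2_def]
    exact ccf_diag_bound hd hlam Y t s k (hπ1lam k hk)
  have hco : ∀ k ∈ Finset.range N, ∀ l ∈ Finset.range N, k ≠ l →
      |ccf N p Y t s k l| ≤ κn * |Y k t * Y l t - Y k s * Y l s| := by
    intro k hk l hl hkl
    have h := ccf_off_bound (n := n) hlam hlamstar Y t s k l (hπ1lam k hk) (hπ1lam l hl)
      (hπ2lam k hk l hl hkl) (hΔn k hk l hl hkl)
    have heq : (C₁/(n:ℝ))/lamstar * (lam*lam)⁻¹ = κn := by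
      rw [hκn_def, hκ_def]
      field_simp
    rw [heq] at h
    exact h
  -- row-sum bounds
  have htk : ∀ k ∈ Finset.range N, ∑ l ∈ Finset.range N, |ccf N p Y t s k l|
      ≤ κn * (|Y k t| * ((N:ℝ)*s3*u) + |Y k t - Y k s| * ((N:ℝ)*sA))
        + lm2 * |Y k t * Y k t - Y k s * Y k s| := by
    intro k hk
    rw [← Finset.sum_erase_add (Finset.range N) _ hk]
    refine add_le_add ?_ (hcd k hk)
    calc ∑ l ∈ (Finset.range N).erase k, |ccf N p Y t s k l|
        ≤ ∑ l ∈ (Finset.range N).erase k, κn * |Y k t * Y l t - Y k s * Y l s| := by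
          refine Finset.sum_le_sum fun l hl => ?_
          exact hco k hk l (Finset.mem_of_mem_erase hl)
            (Ne.symm (Finset.ne_of_mem_erase hl))
      _ ≤ ∑ l ∈ Finset.range N, κn * |Y k t * Y l t - Y k s * Y l s| := by
          refine Finset.sum_le_sum_of_subset_of_nonneg (Finset.erase_subset _ _) ?_
          intro l _ _
          positivity
      _ = κn * ∑ l ∈ Finset.range N, |Y k t * Y l t - Y k s * Y l s| := by
          rw [Finset.mul_sum]
      _ ≤ κn * (|Y k t| * ((N:ℝ)*s3*u) + |Y k t - Y k s| * ((N:ℝ)*sA)) := by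
          refine mul_le_mul_of_nonneg_left ?_ hκn0
          calc ∑ l ∈ Finset.range N, |Y k t * Y l t - Y k s * Y l s|
              ≤ ∑ l ∈ Finset.range N,
                  (|Y k t| * |Y l t - Y l s| + |Y k t - Y k s| * |Y l s|) := by
                refine Finset.sum_le_sum fun l _ => ?_
                have hident : Y k t * Y l t - Y k s * Y l s
                    = Y k t * (Y l t - Y l s) + (Y k t - Y k s) * Y l s := by ring
                calc |Y k t * Y l t - Y k s * Y l s|
                    ≤ |Y k t * (Y l t - Y l s)| + |(Y k t - Y k s) * Y l s| := by
                      rw [hident]; exact abs_add_le _ _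
                  _ = |Y k t| * |Y l t - Y l s| + |Y k t - Y k s| * |Y l s| := by
                      rw [abs_mul, abs_mul]
            _ = |Y k t| * (∑ l ∈ Finset.range N, |Y l t - Y l s|)
                  + |Y k t - Y k s| * ∑ l ∈ Finset.range N, |Y l s| := by
                rw [Finset.sum_add_distrib, Finset.mul_sum, Finset.mul_sum]
            _ ≤ |Y k t| * ((N:ℝ)*s3*u) + |Y k t - Y k s| * ((N:ℝ)*sA) := by
                refine add_le_add ?_ ?_
                · exact mul_le_mul_of_nonneg_left hgabs (abs_nonneg _)
                · exact mul_le_mul_of_nonneg_left (hYabs s hs) (abs_nonneg _)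
  -- sum of squared row sums
  have hNn2 : (N:ℝ) ≤ (N:ℝ)^2/(n:ℝ) := by
    rw [le_div_iff₀ hnR]
    calc (N:ℝ)*(n:ℝ) ≤ (N:ℝ)*(N:ℝ) := mul_le_mul_of_nonneg_left hnNR hNR.le
      _ = (N:ℝ)^2 := (sq (N:ℝ)).symm
  have hx2 : ∑ k ∈ Finset.range N,
      (κn * (|Y k t| * ((N:ℝ)*s3*u) + |Y k t - Y k s| * ((N:ℝ)*sA)))^2
      ≤ 4*κn^2*(N:ℝ)^3*A*C₃*u^2 := by
    calc ∑ k ∈ Finset.range N,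
        (κn * (|Y k t| * ((N:ℝ)*s3*u) + |Y k t - Y k s| * ((N:ℝ)*sA)))^2
        ≤ ∑ k ∈ Finset.range N,
            κn^2 * (2*((N:ℝ)*s3*u)^2*(Y k t)^2 + 2*((N:ℝ)*sA)^2*(Y k t - Y k s)^2) := by
          refine Finset.sum_le_sum fun k _ => ?_
          rw [mul_pow]
          refine mul_le_mul_of_nonneg_left ?_ (sq_nonneg κn)
          have h1 := sq_add_le' (|Y k t| * ((N:ℝ)*s3*u)) (|Y k t - Y k s| * ((N:ℝ)*sA))
          calc (|Y k t| * ((N:ℝ)*s3*u) + |Y k t - Y k s| * ((N:ℝ)*sA))^2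
              ≤ 2*(|Y k t| * ((N:ℝ)*s3*u))^2 + 2*(|Y k t - Y k s| * ((N:ℝ)*sA))^2 := h1
            _ = 2*((N:ℝ)*s3*u)^2*(Y k t)^2 + 2*((N:ℝ)*sA)^2*(Y k t - Y k s)^2 := by
                simp only [mul_pow, sq_abs]
                ring
      _ = ∑ k ∈ Finset.range N, (κn^2 * (2*((N:ℝ)*s3*u)^2) * (Y k t)^2)
            + ∑ k ∈ Finset.range N, (κn^2 * (2*((N:ℝ)*sA)^2) * (Y k t - Y k s)^2) := by
          rw [← Finset.sum_add_distrib]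
          exact Finset.sum_congr rfl fun k _ => by ring
      _ = κn^2 * (2*((N:ℝ)*s3*u)^2*(∑ k ∈ Finset.range N, (Y k t)^2)
            + 2*((N:ℝ)*sA)^2*∑ k ∈ Finset.range N, (Y k t - Y k s)^2) := by
          rw [← Finset.mul_sum, ← Finset.mul_sum]
          ring
      _ ≤ κn^2 * (2*((N:ℝ)*s3*u)^2*((N:ℝ)*A) + 2*((N:ℝ)*sA)^2*((N:ℝ)*(C₃*u^2))) := by
          refine mul_le_mul_of_nonneg_left ?_ (sq_nonneg κn)
          refine add_le_add ?_ ?_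
          · exact mul_le_mul_of_nonneg_left (hY2 t ht) (by positivity)
          · exact mul_le_mul_of_nonneg_left hg2 (by positivity)
      _ = 4*κn^2*(N:ℝ)^3*A*C₃*u^2 := by
          rw [mul_pow, mul_pow, mul_pow, hs3sq, hsAsq]
          ring
  have hy2 : ∑ k ∈ Finset.range N, (lm2 * |Y k t * Y k t - Y k s * Y k s|)^2
      ≤ lm2^2*(4*(N:ℝ)*E2*u^2) := by
    calc ∑ k ∈ Finset.range N, (lm2 * |Y k t * Y k t - Y k s * Y k s|)^2
        = lm2^2 * ∑ k ∈ Finset.range N, (Y k t * Y k t - Y k s * Y k s)^2 := by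
          rw [Finset.mul_sum]
          exact Finset.sum_congr rfl fun k _ => by
            simp only [mul_pow, sq_abs]
      _ ≤ lm2^2*(4*(N:ℝ)*E2*u^2) := mul_le_mul_of_nonneg_left hdk2 (sq_nonneg lm2)
  have hsumt2 : ∑ k ∈ Finset.range N, (∑ l ∈ Finset.range N, |ccf N p Y t s k l|)^2
      ≤ 8*κ^2*A*C₃*(N:ℝ)^3*u^2/(n:ℝ)^2 + 2*(4*lm2^2*E2*(N:ℝ)*u^2) := by
    have step : ∑ k ∈ Finset.range N, (∑ l ∈ Finset.range N, |ccf N p Y t s k l|)^2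
        ≤ 8*κn^2*(N:ℝ)^3*A*C₃*u^2 + 2*(lm2^2*(4*(N:ℝ)*E2*u^2)) := by
      calc ∑ k ∈ Finset.range N, (∑ l ∈ Finset.range N, |ccf N p Y t s k l|)^2
          ≤ ∑ k ∈ Finset.range N,
              (κn * (|Y k t| * ((N:ℝ)*s3*u) + |Y k t - Y k s| * ((N:ℝ)*sA))
                + lm2 * |Y k t * Y k t - Y k s * Y k s|)^2 := by
            refine Finset.sum_le_sum fun k hk => ?_
            exact pow_le_pow_left₀ (Finset.sum_nonneg fun l _ => abs_nonneg _) (htk k hk) 2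
        _ ≤ ∑ k ∈ Finset.range N,
            (2*(κn * (|Y k t| * ((N:ℝ)*s3*u) + |Y k t - Y k s| * ((N:ℝ)*sA)))^2
              + 2*(lm2 * |Y k t * Y k t - Y k s * Y k s|)^2) :=
            Finset.sum_le_sum fun k _ => sq_add_le' _ _
        _ = 2*(∑ k ∈ Finset.range N,
              (κn * (|Y k t| * ((N:ℝ)*s3*u) + |Y k t - Y k s| * ((N:ℝ)*sA)))^2)
            + 2*∑ k ∈ Finset.range N, (lm2 * |Y k t * Y k t - Y k s * Y k s|)^2 := by
            rw [Finset.sum_add_distrib, ← Finset.mul_sum, ← Finset.mul_sum]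
        _ ≤ 2*(4*κn^2*(N:ℝ)^3*A*C₃*u^2) + 2*(lm2^2*(4*(N:ℝ)*E2*u^2)) := by
            refine add_le_add (mul_le_mul_of_nonneg_left hx2 (by norm_num))
              (mul_le_mul_of_nonneg_left hy2 (by norm_num))
        _ = 8*κn^2*(N:ℝ)^3*A*C₃*u^2 + 2*(lm2^2*(4*(N:ℝ)*E2*u^2)) := by ring
    refine le_trans step (le_of_eq ?_)
    rw [hκn_def]
    field_simp
  have hS1 : ∑ k ∈ Finset.range N, ∑ l ∈ Finset.range N, |ccf N p Y t s k l|
      ≤ K₁*(N:ℝ)^2*u/(n:ℝ) := by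
    calc ∑ k ∈ Finset.range N, ∑ l ∈ Finset.range N, |ccf N p Y t s k l|
        ≤ ∑ k ∈ Finset.range N,
            (κn * (|Y k t| * ((N:ℝ)*s3*u) + |Y k t - Y k s| * ((N:ℝ)*sA))
              + lm2 * |Y k t * Y k t - Y k s * Y k s|) :=
          Finset.sum_le_sum htk
      _ = κn * ((∑ k ∈ Finset.range N, |Y k t|) * ((N:ℝ)*s3*u)
            + (∑ k ∈ Finset.range N, |Y k t - Y k s|) * ((N:ℝ)*sA))
          + lm2 * ∑ k ∈ Finset.range N, |Y k t * Y k t - Y k s * Y k s| := by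
          rw [Finset.sum_add_distrib, ← Finset.mul_sum, ← Finset.mul_sum,
            Finset.sum_add_distrib, ← Finset.sum_mul, ← Finset.sum_mul]
      _ ≤ κn * (((N:ℝ)*sA) * ((N:ℝ)*s3*u) + ((N:ℝ)*s3*u) * ((N:ℝ)*sA))
          + lm2 * (2*(N:ℝ)*sE*u) := by
          refine add_le_add (mul_le_mul_of_nonneg_left (add_le_add ?_ ?_) hκn0)
            (mul_le_mul_of_nonneg_left hdkabs hlm20.le)
          · exact mul_le_mul_of_nonneg_right (hYabs t ht) (by positivity)
          · exact mul_le_mul_of_nonneg_right hgabs (by positivity)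
      _ = 2*κ*sA*s3*((N:ℝ)^2*u/(n:ℝ)) + 2*lm2*sE*((N:ℝ)*u) := by
          rw [hκn_def]
          field_simp
          ring
      _ ≤ 2*κ*sA*s3*((N:ℝ)^2*u/(n:ℝ)) + 2*lm2*sE*((N:ℝ)^2*u/(n:ℝ)) := by
          refine add_le_add (le_refl _) (mul_le_mul_of_nonneg_left ?_ (by positivity))
          calc (N:ℝ)*u ≤ ((N:ℝ)^2/(n:ℝ))*u := mul_le_mul_of_nonneg_right hNn2 hu0
            _ = (N:ℝ)^2*u/(n:ℝ) := by ring
      _ = K₁*(N:ℝ)^2*u/(n:ℝ) := by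
          rw [hK₁_def]
          ring
  -- variance bounds
  have hVb := diag_bound hd (fun k => ccf N p Y t s k k) (C₁/(n:ℝ)) (by positivity) hΔn
  have hVbound : dExp N p (fun sam =>
      (∑ k ∈ Finset.range N, ccf N p Y t s k k * (ind k sam - pi1 N p k))^2)
      ≤ 4*lm2^2*E2*(N:ℝ)*u^2 + C₁/(n:ℝ)*(4*lm2^2*E2*(N:ℝ)^2*u^2) := by
    refine le_trans hVb (add_le_add ?_ ?_)
    · calc ∑ k ∈ Finset.range N, (ccf N p Y t s k k)^2
          ≤ ∑ k ∈ Finset.range N, (lm2 * |Y k t * Y k t - Y k s * Y k s|)^2 := by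
            refine Finset.sum_le_sum fun k hk => ?_
            rw [← sq_abs (ccf N p Y t s k k)]
            exact pow_le_pow_left₀ (abs_nonneg _) (hcd k hk) 2
        _ ≤ lm2^2*(4*(N:ℝ)*E2*u^2) := hy2
        _ = 4*lm2^2*E2*(N:ℝ)*u^2 := by ring
    · refine mul_le_mul_of_nonneg_left ?_ (by positivity)
      calc (∑ k ∈ Finset.range N, |ccf N p Y t s k k|)^2
          ≤ (lm2*(2*(N:ℝ)*sE*u))^2 := by
            refine pow_le_pow_left₀ (Finset.sum_nonneg fun k _ => abs_nonneg _) ?_ 2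
            calc ∑ k ∈ Finset.range N, |ccf N p Y t s k k|
                ≤ ∑ k ∈ Finset.range N, lm2 * |Y k t * Y k t - Y k s * Y k s| :=
                  Finset.sum_le_sum hcd
              _ = lm2 * ∑ k ∈ Finset.range N, |Y k t * Y k t - Y k s * Y k s| := by
                  rw [Finset.mul_sum]
              _ ≤ lm2*(2*(N:ℝ)*sE*u) := mul_le_mul_of_nonneg_left hdkabs hlm20.le
        _ = 4*lm2^2*E2*(N:ℝ)^2*u^2 := by
            rw [show (lm2*(2*(N:ℝ)*sE*u))^2 = 4*lm2^2*sE^2*(N:ℝ)^2*u^2 from by ring, hsEsq]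
  have hWb := quad_bound hd (ccf N p Y t s) (fun k l => by rw [ccf_symm k l]) D₄ hD₄0 hdist
  have hWbound : dExp N p (fun sam =>
      (∑ k ∈ Finset.range N, ∑ l ∈ Finset.range N,
        if k = l then 0 else ccf N p Y t s k l * (ind k sam * ind l sam - pi2 N p k l))^2)
      ≤ D₄*(K₁*(N:ℝ)^2*u/(n:ℝ))^2
        + 4*(8*κ^2*A*C₃*(N:ℝ)^3*u^2/(n:ℝ)^2 + 2*(4*lm2^2*E2*(N:ℝ)*u^2)) := by
    refine le_trans hWb (add_le_add ?_ ?_)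
    · refine mul_le_mul_of_nonneg_left ?_ hD₄0
      refine pow_le_pow_left₀ ?_ hS1 2
      exact Finset.sum_nonneg fun k _ => Finset.sum_nonneg fun l _ => abs_nonneg _
    · exact mul_le_mul_of_nonneg_left hsumt2 (by norm_num)
  -- rewrite the objective
  have hZrw : dExp N p (fun sam =>
      (htCovEst N p Y sam t t - htCov N p Y t t
        - htCovEst N p Y sam s s + htCov N p Y s s)^2)
      = (((N:ℝ)^2)⁻¹)^2 * dExp N p (fun sam =>
          ((∑ k ∈ Finset.range N, ccf N p Y t s k k * (ind k sam - pi1 N p k))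
            + ∑ k ∈ Finset.range N, ∑ l ∈ Finset.range N,
              if k = l then 0
              else ccf N p Y t s k l * (ind k sam * ind l sam - pi2 N p k l))^2) := by
    rw [← dExp_const_mul]
    refine dExp_congr fun sam hp => ?_
    rw [Zrep Y hd hπ2ne t s hp, mul_pow]
  have hsplit : dExp N p (fun sam =>
      ((∑ k ∈ Finset.range N, ccf N p Y t s k k * (ind k sam - pi1 N p k))
        + ∑ k ∈ Finset.range N, ∑ l ∈ Finset.range N,
          if k = l then 0
          else ccf N p Y t s k l * (ind k sam * ind l sam - pi2 N p k l))^2)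
      ≤ 2*dExp N p (fun sam =>
          (∑ k ∈ Finset.range N, ccf N p Y t s k k * (ind k sam - pi1 N p k))^2)
        + 2*dExp N p (fun sam =>
          (∑ k ∈ Finset.range N, ∑ l ∈ Finset.range N,
            if k = l then 0
            else ccf N p Y t s k l * (ind k sam * ind l sam - pi2 N p k l))^2) := by
    calc dExp N p (fun sam =>
        ((∑ k ∈ Finset.range N, ccf N p Y t s k k * (ind k sam - pi1 N p k))
          + ∑ k ∈ Finset.range N, ∑ l ∈ Finset.range N,
            if k = l then 0
            else ccf N p Y t s k l * (ind k sam * ind l sam - pi2 N p k l))^2)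
        ≤ dExp N p (fun sam =>
            2*(∑ k ∈ Finset.range N, ccf N p Y t s k k * (ind k sam - pi1 N p k))^2
            + 2*(∑ k ∈ Finset.range N, ∑ l ∈ Finset.range N,
              if k = l then 0
              else ccf N p Y t s k l * (ind k sam * ind l sam - pi2 N p k l))^2) :=
          dExp_mono hd.nonneg fun sam => sq_add_le' _ _
      _ = 2*dExp N p (fun sam =>
            (∑ k ∈ Finset.range N, ccf N p Y t s k k * (ind k sam - pi1 N p k))^2)
          + 2*dExp N p (fun sam =>
            (∑ k ∈ Finset.range N, ∑ l ∈ Finset.range N,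
              if k = l then 0
              else ccf N p Y t s k l * (ind k sam * ind l sam - pi2 N p k l))^2) := by
          rw [dExp_add, dExp_const_mul, dExp_const_mul]
  -- final assembly
  rw [h2β]
  calc (n:ℝ)^2 * dExp N p (fun sam =>
      (htCovEst N p Y sam t t - htCov N p Y t t
        - htCovEst N p Y sam s s + htCov N p Y s s)^2)
      = (n:ℝ)^2 * ((((N:ℝ)^2)⁻¹)^2 * dExp N p (fun sam =>
          ((∑ k ∈ Finset.range N, ccf N p Y t s k k * (ind k sam - pi1 N p k))
            + ∑ k ∈ Finset.range N, ∑ l ∈ Finset.range N,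
              if k = l then 0
              else ccf N p Y t s k l * (ind k sam * ind l sam - pi2 N p k l))^2)) := by
        rw [hZrw]
    _ ≤ (n:ℝ)^2 * ((((N:ℝ)^2)⁻¹)^2 *
          (2*(4*lm2^2*E2*(N:ℝ)*u^2 + C₁/(n:ℝ)*(4*lm2^2*E2*(N:ℝ)^2*u^2))
            + 2*(D₄*(K₁*(N:ℝ)^2*u/(n:ℝ))^2
              + 4*(8*κ^2*A*C₃*(N:ℝ)^3*u^2/(n:ℝ)^2 + 2*(4*lm2^2*E2*(N:ℝ)*u^2))))) := by
        refine mul_le_mul_of_nonneg_left (mul_le_mul_of_nonneg_left ?_ (by positivity))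
          (by positivity)
        refine le_trans hsplit ?_
        have hb1 : 2*dExp N p (fun sam =>
            (∑ k ∈ Finset.range N, ccf N p Y t s k k * (ind k sam - pi1 N p k))^2)
            ≤ 2*(4*lm2^2*E2*(N:ℝ)*u^2 + C₁/(n:ℝ)*(4*lm2^2*E2*(N:ℝ)^2*u^2)) :=
          mul_le_mul_of_nonneg_left hVbound (by norm_num)
        have hb2 : 2*dExp N p (fun sam =>
            (∑ k ∈ Finset.range N, ∑ l ∈ Finset.range N,
              if k = l then 0
              else ccf N p Y t s k l * (ind k sam * ind l sam - pi2 N p k l))^2)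
            ≤ 2*(D₄*(K₁*(N:ℝ)^2*u/(n:ℝ))^2
              + 4*(8*κ^2*A*C₃*(N:ℝ)^3*u^2/(n:ℝ)^2 + 2*(4*lm2^2*E2*(N:ℝ)*u^2))) :=
          mul_le_mul_of_nonneg_left hWbound (by norm_num)
        linarith
    _ ≤ (18*(4*lm2^2*E2) + 2*C₁*(4*lm2^2*E2) + 8*(8*κ^2*A*C₃) + 2*K₁^2 + 1)
          * ((n:ℝ)⁻¹ + D₄) * u^2 := by
        have := final_arith (q := (n:ℝ)) (M := (N:ℝ)) (u := u) (D₄ := D₄)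
          (a := 4*lm2^2*E2) (c1 := C₁) (k1 := K₁) (w := 8*κ^2*A*C₃)
          h1n hnNR hu0 hD₄0 (by positivity) hC₁.le (by positivity)
        calc (n:ℝ)^2 * ((((N:ℝ)^2)⁻¹)^2 *
            (2*(4*lm2^2*E2*(N:ℝ)*u^2 + C₁/(n:ℝ)*(4*lm2^2*E2*(N:ℝ)^2*u^2))
              + 2*(D₄*(K₁*(N:ℝ)^2*u/(n:ℝ))^2
                + 4*(8*κ^2*A*C₃*(N:ℝ)^3*u^2/(n:ℝ)^2 + 2*(4*lm2^2*E2*(N:ℝ)*u^2)))))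
            = (n:ℝ)^2 * ((((N:ℝ)^2)⁻¹)^2
              * (2*((4*lm2^2*E2)*(N:ℝ)*u^2 + C₁/(n:ℝ)*((4*lm2^2*E2)*(N:ℝ)^2*u^2))
                + 2*(D₄*(K₁*(N:ℝ)^2*u/(n:ℝ))^2
                  + 4*((8*κ^2*A*C₃)*(N:ℝ)^3*u^2/(n:ℝ)^2
                    + 2*((4*lm2^2*E2)*(N:ℝ)*u^2))))) := by ring
          _ ≤ (18*(4*lm2^2*E2) + 2*C₁*(4*lm2^2*E2) + 8*(8*κ^2*A*C₃) + 2*K₁^2 + 1)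
              * ((n:ℝ)⁻¹ + D₄) * u^2 := this
    _ = (72*lm2^2*E2 + 8*C₁*lm2^2*E2 + 64*κ^2*A*C₃ + 2*K₁^2 + 1)
          * ((n:ℝ)⁻¹ + D₄) * u^2 := by ring

end
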